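/- arXiv:2211.11145 — 9 statements merged into one kernel-verified Lean document; each statement's English description precedes it below -/
import Mathlib

section
/- Let β₀ < β₁ be real numbers and 0 < ε < (β₁ − β₀)/2. There exists a countably infinite set B = {b₀, b₁, b₂, ...} of real numbers such that: (1) B is linearly independent over ℚ; (2) for all n ≥ 1, β₀ < b₀ < b₂ₙ < β₀ + ε and β₁ − ε < b₂ₙ₊₁ < b₁ < β₁; (3) b₂ₙ → b₀ and b₂ₙ₊₁ → b₁ as n → ∞. -/
open Filter



private lemma rat_mul_btwn_pos (a c w : ℝ) (hac : a < c) (hw : 0 < w) :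
    ∃ q : ℚ, a < q * w ∧ q * w < c := by
  obtain ⟨q, h1, h2⟩ := exists_rat_btwn (show a / w < c / w by gcongr)
  exact ⟨q, (div_lt_iff₀ hw).mp h1, (lt_div_iff₀ hw).mp h2⟩

private lemma rat_mul_btwn (a c w : ℝ) (hac : a < c) (hw : w ≠ 0) :
    ∃ q : ℚ, a < q * w ∧ q * w < c := by
  rcases hw.lt_or_gt with hw | hw
  · obtain ⟨q, h1, h2⟩ := rat_mul_btwn_pos a c (-w) hac (by linarith)
    exact ⟨-q, by push_cast; nlinarith, by push_cast; nlinarith⟩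
  · exact rat_mul_btwn_pos a c w hac hw

private lemma rat_mul_btwn_ne (a c w : ℝ) (hac : a < c) (hw : w ≠ 0) :
    ∃ q : ℚ, q ≠ 0 ∧ a < q * w ∧ q * w < c := by
  rcases le_or_gt c 0 with hc | hc
  · have ha : a < 0 := lt_of_lt_of_le hac hc
    obtain ⟨q, h1, h2⟩ := rat_mul_btwn a (min c (a / 2)) w
      (lt_min hac (by linarith)) hw
    refine ⟨q, fun h => ?_, h1, lt_of_lt_of_le h2 (min_le_left _ _)⟩
    rw [h] at h2; push_cast at h2
    have := min_le_right c (a / 2); linarith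
  · obtain ⟨q, h1, h2⟩ := rat_mul_btwn (max a (c / 2)) c w
      (max_lt hac (by linarith)) hw
    refine ⟨q, fun h => ?_, lt_of_le_of_lt (le_max_left _ _) h1, h2⟩
    rw [h] at h1; push_cast at h1
    have := le_max_right a (c / 2); linarith

private lemma exists_nat_emb_basis :
    ∃ w : ℕ → ℝ, LinearIndependent ℚ w := by
  classical
  let B := Module.Basis.ofVectorSpace ℚ ℝ
  have hinf : Infinite (Module.Basis.ofVectorSpaceIndex ℚ ℝ) := by
    rw [Set.infinite_coe_iff]
    intro hfin
    haveI : Fintype (Module.Basis.ofVectorSpaceIndex ℚ ℝ) := hfin.fintype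
    have : Countable ℝ := Countable.of_equiv _ (B.equivFun.toEquiv).symm
    exact Cardinal.not_countable_real Set.countable_univ
  let e := Infinite.natEmbedding (Module.Basis.ofVectorSpaceIndex ℚ ℝ)
  exact ⟨fun n => B (e n), B.linearIndependent.comp e e.injective⟩

/-- von Neumann's construction: given β₀ < β₁ and 0 < ε < (β₁ − β₀)/2, there is a
countably infinite ℚ-linearly independent set B = {b₀, b₁, b₂, ...} of reals with
β₀ < b₀ < b₂ₙ < β₀ + ε and β₁ − ε < b₂ₙ₊₁ < b₁ < β₁ for all n ≥ 1,
and b₂ₙ → b₀, b₂ₙ₊₁ → b₁. -/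
theorem vonNeumann_set_exists (β₀ β₁ ε : ℝ) (hβ : β₀ < β₁)
    (hε : 0 < ε) (hε' : ε < (β₁ - β₀) / 2) :
    ∃ b : ℕ → ℝ, Function.Injective b ∧
      LinearIndependent ℚ b ∧
      (∀ n : ℕ, 1 ≤ n →
        β₀ < b 0 ∧ b 0 < b (2 * n) ∧ b (2 * n) < β₀ + ε ∧
        β₁ - ε < b (2 * n + 1) ∧ b (2 * n + 1) < b 1 ∧ b 1 < β₁) ∧
      Tendsto (fun n : ℕ => b (2 * n)) atTop (nhds (b 0)) ∧
      Tendsto (fun n : ℕ => b (2 * n + 1)) atTop (nhds (b 1)) := by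
  classical
  obtain ⟨w, hwli⟩ := exists_nat_emb_basis
  have hw0 : ∀ n, w n ≠ 0 := fun n => hwli.ne_zero n
  obtain ⟨q₀, hq₀, h₀l, h₀r⟩ := rat_mul_btwn_ne β₀ (β₀ + ε / 2) (w 0)
    (by linarith) (hw0 0)
  obtain ⟨q₁, hq₁, h₁l, h₁r⟩ := rat_mul_btwn_ne (β₁ - ε / 2) β₁ (w 1)
    (by linarith) (hw0 1)
  set b0 : ℝ := (q₀ : ℝ) * w 0 with hb0def
  set b1 : ℝ := (q₁ : ℝ) * w 1 with hb1def
  set Lo : ℕ → ℝ := fun n =>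
    if n % 2 = 0 then b0 else b1 - min (ε / 2) (1 / ((n : ℝ) + 1)) with hLodef
  set Hi : ℕ → ℝ := fun n =>
    if n % 2 = 0 then b0 + min (ε / 2) (1 / ((n : ℝ) + 1)) else b1 with hHidef
  have hmin : ∀ n : ℕ, 0 < min (ε / 2) (1 / ((n : ℝ) + 1)) := fun n =>
    lt_min (by linarith) (by positivity)
  have hlh : ∀ n, Lo n < Hi n := by
    intro n
    by_cases h : n % 2 = 0 <;> simp only [hLodef, hHidef, h, if_true, if_false,
      reduceIte] <;> linarith [hmin n]
  have key : ∀ n, ∃ q : ℚ, q ≠ 0 ∧ Lo n < q * w n ∧ q * w n < Hi n :=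
    fun n => rat_mul_btwn_ne _ _ _ (hlh n) (hw0 n)
  choose Q hQ0 hQl hQr using key
  set c : ℕ → ℚ := fun n => if n = 0 then q₀ else if n = 1 then q₁ else Q n
    with hcdef
  have hcne : ∀ n, c n ≠ 0 := by
    intro n; simp only [hcdef]; split_ifs <;> first | exact hq₀ | exact hq₁ | exact hQ0 n
  set b : ℕ → ℝ := fun n => (c n : ℝ) * w n with hbdef
  have hb0 : b 0 = b0 := by simp [hbdef, hcdef, hb0def]
  have hb1 : b 1 = b1 := by simp [hbdef, hcdef, hb1def]
  have hbn : ∀ n, 2 ≤ n → b n = (Q n : ℝ) * w n := by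
    intro n hn
    simp only [hbdef, if_neg (by omega : ¬ n = 0), if_neg (by omega : ¬ n = 1), hcdef]
  have hli : LinearIndependent ℚ b := by
    have h := hwli.units_smul (fun n => Units.mk0 (c n) (hcne n))
    convert h using 1
    funext n; simp [hbdef, Units.smul_def, Rat.smul_def]
  have heven : ∀ n : ℕ, 1 ≤ n →
      b0 < b (2 * n) ∧ b (2 * n) < b0 + min (ε / 2) (1 / (((2 * n : ℕ) : ℝ) + 1)) := by
    intro n hn
    have h2 : 2 ≤ 2 * n := by omega
    have hmod : (2 * n) % 2 = 0 := by omega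
    have hl := hQl (2 * n); have hr := hQr (2 * n)
    rw [hbn _ h2]
    simp only [hLodef, hHidef, hmod, if_true, reduceIte] at hl hr
    exact ⟨hl, hr⟩
  have hodd : ∀ n : ℕ, 1 ≤ n →
      b1 - min (ε / 2) (1 / (((2 * n + 1 : ℕ) : ℝ) + 1)) < b (2 * n + 1) ∧
      b (2 * n + 1) < b1 := by
    intro n hn
    have h2 : 2 ≤ 2 * n + 1 := by omega
    have hmod : (2 * n + 1) % 2 = 1 := by omega
    have hl := hQl (2 * n + 1); have hr := hQr (2 * n + 1)
    rw [hbn _ h2]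
    simp only [hLodef, hHidef, hmod, reduceIte, if_false] at hl hr
    · exact ⟨hl, hr⟩
  refine ⟨b, hli.injective, hli, ?_, ?_, ?_⟩
  · intro n hn
    obtain ⟨he1, he2⟩ := heven n hn
    obtain ⟨ho1, ho2⟩ := hodd n hn
    have hml := min_le_left (ε / 2) (1 / (((2 * n : ℕ) : ℝ) + 1))
    have hml' := min_le_left (ε / 2) (1 / (((2 * n + 1 : ℕ) : ℝ) + 1))
    rw [hb0, hb1]
    refine ⟨h₀l, he1, by linarith, by linarith, ho2, h₁r⟩
  · rw [hb0]
    have h1 : Tendsto (fun n : ℕ => 1 / ((n : ℝ) + 1)) atTop (nhds 0) :=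
      tendsto_one_div_add_atTop_nhds_zero_nat
    have h2 : Tendsto (fun n : ℕ => 2 * n) atTop atTop :=
      tendsto_atTop_mono (fun n => by simp only [id_eq]; omega) tendsto_id
    have h3 := h1.comp h2
    have h4 : Tendsto (fun n : ℕ => b0 + 1 / (((2 * n : ℕ) : ℝ) + 1)) atTop
        (nhds b0) := by
      have := (tendsto_const_nhds : Tendsto (fun _ : ℕ => b0) atTop (nhds b0)).add h3
      simpa using this
    refine tendsto_of_tendsto_of_tendsto_of_le_of_le' tendsto_const_nhds h4 ?_ ?_
    · filter_upwards [eventually_ge_atTop 1] with n hn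
      exact (heven n hn).1.le
    · filter_upwards [eventually_ge_atTop 1] with n hn
      exact le_trans (heven n hn).2.le (by
        have := min_le_right (ε / 2) (1 / (((2 * n : ℕ) : ℝ) + 1)); linarith)
  · rw [hb1]
    have h1 : Tendsto (fun n : ℕ => 1 / ((n : ℝ) + 1)) atTop (nhds 0) :=
      tendsto_one_div_add_atTop_nhds_zero_nat
    have h2 : Tendsto (fun n : ℕ => 2 * n + 1) atTop atTop :=
      tendsto_atTop_mono (fun n => by simp only [id_eq]; omega) tendsto_id
    have h3 := h1.comp h2
    have h4 : Tendsto (fun n : ℕ => b1 - 1 / (((2 * n + 1 : ℕ) : ℝ) + 1)) atTop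
        (nhds b1) := by
      have := (tendsto_const_nhds : Tendsto (fun _ : ℕ => b1) atTop (nhds b1)).sub h3
      simpa using this
    refine tendsto_of_tendsto_of_tendsto_of_le_of_le' h4 tendsto_const_nhds ?_ ?_
    · filter_upwards [eventually_ge_atTop 1] with n hn
      refine le_trans ?_ (hodd n hn).1.le
      have := min_le_right (ε / 2) (1 / (((2 * n + 1 : ℕ) : ℝ) + 1)); linarith
    · filter_upwards [eventually_ge_atTop 1] with n hn
      exact (hodd n hn).2.le
end

section
/- Let ε > 0 and let B ⊆ (−2ε, 2ε) be a set satisfying the conclusions of von Neumann's construction with β₀ = −2ε and β₁ = 2ε: B = {b₀, b₁, b₂, ...} is ℚ-linearly independent with b₀ = min B, b₁ = max B, and for every δ > 0 the set {b ∈ B : b₀ + δ < b < b₁ − δ} is finite. Let G be the subgroup of ℝ generated by B, and let J be a finite interval of length greater than 8ε. Then no finite union of pairwise disjoint translates of B contains J ∩ G. -/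
open Set

/-- No finite union of pairwise disjoint translates of the von Neumann set B
contains J ∩ G, where G is the subgroup generated by B and J is an interval
of length greater than 8ε. -/
theorem no_finite_union_of_translates_covers
    (ε : ℝ) (hε : 0 < ε)
    (b : ℕ → ℝ) (hinj : Function.Injective b)
    (hrange : Set.range b ⊆ Ioo (-2 * ε) (2 * ε))
    (hli : LinearIndependent ℚ b)
    (hmin : ∀ n, b 0 ≤ b n) (hmax : ∀ n, b n ≤ b 1)
    (hacc : ∀ δ : ℝ, 0 < δ → {n : ℕ | b 0 + δ < b n ∧ b n < b 1 - δ}.Finite)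
    (c₀ c₁ : ℝ) (hlen : 8 * ε < c₁ - c₀)
    (J : Set ℝ) (hJ₁ : Ioo c₀ c₁ ⊆ J) (hJ₂ : J ⊆ Icc c₀ c₁)
    (k : ℕ) (a : Fin k → ℝ)
    (hdisj : ∀ i j : Fin k, i ≠ j →
      Disjoint ((a i + ·) '' Set.range b) ((a j + ·) '' Set.range b)) :
    ¬ (J ∩ (AddSubgroup.closure (Set.range b) : Set ℝ) ⊆
        ⋃ i : Fin k, (a i + ·) '' Set.range b) := by
  intro hsub
  set B : Set ℝ := Set.range b with hB
  have hc01 : c₀ < c₁ := by nlinarith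
  -- b 0 < b 1
  have hb01 : b 0 < b 1 := lt_of_le_of_ne (hmax 0) (fun h => by simpa using hinj h)
  -- pair linear independence
  have hpair : LinearIndependent ℚ ![b 0, b 1] := by
    have hf : Function.Injective (![0, 1] : Fin 2 → ℕ) := by
      intro i j hij
      fin_cases i <;> fin_cases j <;> simp_all
    have := hli.comp ![0, 1] hf
    convert this using 1
    funext i; fin_cases i <;> rfl
  -- B is closed
  have hBIcc : B ⊆ Icc (b 0) (b 1) := by
    rintro x ⟨n, rfl⟩; exact ⟨hmin n, hmax n⟩
  have hBclosed : IsClosed B := by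
    rw [← closure_subset_iff_isClosed]
    intro x hx
    have hxIcc : x ∈ Icc (b 0) (b 1) :=
      (closure_minimal hBIcc isClosed_Icc) hx
    rcases eq_or_lt_of_le hxIcc.1 with h0 | h0
    · exact ⟨0, h0⟩
    rcases eq_or_lt_of_le hxIcc.2 with h1 | h1
    · exact ⟨1, h1.symm⟩
    set δ : ℝ := min (x - b 0) (b 1 - x) / 2 with hδ
    have hδ0 : 0 < δ := by
      apply div_pos _ two_pos
      exact lt_min (by linarith) (by linarith)
    have hδ1 : δ ≤ (x - b 0) / 2 := by
      apply div_le_div_of_nonneg_right (min_le_left _ _) (by norm_num)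
    have hδ2 : δ ≤ (b 1 - x) / 2 := by
      apply div_le_div_of_nonneg_right (min_le_right _ _) (by norm_num)
    have hfin := hacc δ hδ0
    -- B ⊆ (finite set) ∪ (closed set avoiding x)
    have hsub2 : B ⊆ (b '' {n : ℕ | b 0 + δ < b n ∧ b n < b 1 - δ}) ∪
        {y : ℝ | δ ≤ |y - x|} := by
      rintro y ⟨n, rfl⟩
      by_cases hn : b 0 + δ < b n ∧ b n < b 1 - δ
      · exact Or.inl ⟨n, hn, rfl⟩
      · right
        rw [not_and_or, not_lt, not_lt] at hn
        simp only [mem_setOf_eq]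
        rcases hn with hn | hn
        · rw [abs_sub_comm, abs_of_nonneg (by linarith)]
          linarith
        · rw [abs_of_nonneg (by linarith)]
          linarith
    have hclosed2 : IsClosed ((b '' {n : ℕ | b 0 + δ < b n ∧ b n < b 1 - δ}) ∪
        {y : ℝ | δ ≤ |y - x|}) := by
      apply IsClosed.union (hfin.image b).isClosed
      have : {y : ℝ | δ ≤ |y - x|} = (fun y => |y - x|) ⁻¹' Ici δ := rfl
      rw [this]
      exact IsClosed.preimage (by continuity) isClosed_Ici
    have hx2 := closure_minimal hsub2 hclosed2 hx
    rcases hx2 with hx2 | hx2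
    · rcases hx2 with ⟨n, _, rfl⟩; exact ⟨n, rfl⟩
    · simp only [mem_setOf_eq, sub_self, abs_zero] at hx2
      linarith
  -- B is countable
  have hBcount : B.Countable := countable_range b
  -- G is dense
  have hGdense : Dense (AddSubgroup.closure B : Set ℝ) := by
    rcases AddSubgroup.dense_or_cyclic (AddSubgroup.closure B) with h | ⟨g, hg⟩
    · exact h
    · exfalso
      have hb0 : b 0 ∈ AddSubgroup.closure B :=
        AddSubgroup.subset_closure ⟨0, rfl⟩
      have hb1 : b 1 ∈ AddSubgroup.closure B :=
        AddSubgroup.subset_closure ⟨1, rfl⟩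
      rw [hg, AddSubgroup.mem_closure_singleton] at hb0 hb1
      obtain ⟨n, hn⟩ := hb0
      obtain ⟨m, hm⟩ := hb1
      have key : (m : ℚ) • b 0 + (-n : ℚ) • b 1 = 0 := by
        push_cast
        rw [← hn, ← hm]
        simp only [Rat.smul_def, zsmul_eq_mul]
        push_cast
        ring
      have := (LinearIndependent.pair_iff.mp hpair (m : ℚ) (-n : ℚ) key).2
      have hn0 : (n : ℚ) = 0 := by linarith [neg_eq_zero.mp this]
      have : (n : ℤ) = 0 := by exact_mod_cast hn0
      rw [this, zero_zsmul] at hn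
      exact hli.ne_zero 0 hn.symm
  -- the union is closed and countable
  set U : Set ℝ := ⋃ i : Fin k, (a i + ·) '' B with hU
  have hUeq : ∀ i : Fin k, (a i + ·) '' B = (fun x => x - a i) ⁻¹' B := by
    intro i
    ext x
    constructor
    · rintro ⟨y, hy, rfl⟩; simpa using hy
    · intro hx; exact ⟨x - a i, hx, by ring⟩
  have hUclosed : IsClosed U := by
    apply isClosed_iUnion_of_finite
    intro i
    rw [hUeq i]
    exact IsClosed.preimage (by continuity) hBclosed
  have hUcount : U.Countable := by
    apply Set.countable_iUnion
    intro i
    exact hBcount.image _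
  -- Icc c₀ c₁ ⊆ U
  have hIccU : Icc c₀ c₁ ⊆ U := by
    have h1 : Ioo c₀ c₁ ⊆ closure (Ioo c₀ c₁ ∩ (AddSubgroup.closure B : Set ℝ)) :=
      hGdense.open_subset_closure_inter isOpen_Ioo
    have h2 : Ioo c₀ c₁ ∩ (AddSubgroup.closure B : Set ℝ) ⊆ U := by
      intro x hx
      exact hsub ⟨hJ₁ hx.1, hx.2⟩
    have h3 : Ioo c₀ c₁ ⊆ U :=
      h1.trans ((closure_mono h2).trans hUclosed.closure_subset)
    calc Icc c₀ c₁ = closure (Ioo c₀ c₁) := (closure_Ioo hc01.ne).symm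
      _ ⊆ U := (closure_mono h3).trans hUclosed.closure_subset
  -- measure contradiction
  have h0 : (MeasureTheory.volume (Icc c₀ c₁) : ENNReal) = 0 := by
    rw [← le_zero_iff, ← hUcount.measure_zero MeasureTheory.volume]
    exact MeasureTheory.measure_mono hIccU
  rw [Real.volume_Icc] at h0
  have : (0:ℝ) < c₁ - c₀ := by linarith
  simp [ENNReal.ofReal_eq_zero, not_le.mpr this] at h0
end

section
/- Let c₀ < c₁ and 0 < ε < (c₁ − c₀)/8. Let B ⊆ (−2ε, 2ε) be the von Neumann set with accumulation points b₀ = min B ∈ (−2ε, −ε) and b₁ = max B ∈ (ε, 2ε), ℚ-linearly independent, and let G be the subgroup generated by B. Let J' = (c₀, c₁), let x ∈ J' ∩ G, and let a₁, ..., a_k ∈ ℝ with x ∉ ⋃ᵢ (aᵢ + B). Then there exists a ∈ ℝ such that x ∈ a + B ⊆ J' ∩ G and (a + B) ∩ ⋃ᵢ (aᵢ + B) = ∅. -/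
open Set Filter

lemma key_li (b : ℕ → ℝ) (hli : LinearIndependent ℚ b)
    {n₁ m₁ p₁ n₂ m₂ p₂ : ℕ}
    (h : b n₁ - b m₁ - b p₁ = b n₂ - b m₂ - b p₂)
    (h1 : m₁ ≠ m₂) (h2 : n₂ ≠ m₂) : p₁ = m₂ := by
  classical
  set l : ℕ →₀ ℚ := Finsupp.single n₁ 1 - Finsupp.single m₁ 1 - Finsupp.single p₁ 1
      - Finsupp.single n₂ 1 + Finsupp.single m₂ 1 + Finsupp.single p₂ 1 with hl
  have hcomb : Finsupp.linearCombination ℚ b l = 0 := by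
    have : Finsupp.linearCombination ℚ b l
        = b n₁ - b m₁ - b p₁ - b n₂ + b m₂ + b p₂ := by
      simp [hl, map_add, map_sub, Finsupp.linearCombination_single]
    rw [this]; linarith
  have h0 := linearIndependent_iff.mp hli l hcomb
  have hm := DFunLike.congr_fun h0 m₂
  simp [hl, Finsupp.single_apply, h1, h2, Finsupp.add_apply, Finsupp.sub_apply] at hm
  by_contra hne
  simp [hne] at hm
  split_ifs at hm <;> norm_num at hm

/-- The core lemma: given x ∈ (c₀, c₁) ∩ G not covered by the pairwise translates
a₁ + B, ..., a_k + B, there is a translate a + B containing x, contained in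
(c₀, c₁) ∩ G, and disjoint from all the aᵢ + B. -/
theorem core_lemma
    (c₀ c₁ ε : ℝ) (hε : 0 < ε) (hε' : ε < (c₁ - c₀) / 8)
    (b : ℕ → ℝ) (hinj : Function.Injective b)
    (hli : LinearIndependent ℚ b)
    (hb₀ : b 0 ∈ Ioo (-2 * ε) (-ε)) (hb₁ : b 1 ∈ Ioo ε (2 * ε))
    (heven : ∀ n : ℕ, 1 ≤ n → b 0 < b (2 * n) ∧ b (2 * n) < -ε)
    (hodd : ∀ n : ℕ, 1 ≤ n → ε < b (2 * n + 1) ∧ b (2 * n + 1) < b 1)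
    (htend₀ : Tendsto (fun n : ℕ => b (2 * n)) atTop (nhds (b 0)))
    (htend₁ : Tendsto (fun n : ℕ => b (2 * n + 1)) atTop (nhds (b 1)))
    (x : ℝ) (hx : x ∈ Ioo c₀ c₁)
    (hxG : x ∈ (AddSubgroup.closure (Set.range b) : Set ℝ))
    (k : ℕ) (a : Fin k → ℝ)
    (hxa : x ∉ ⋃ i : Fin k, (a i + ·) '' Set.range b) :
    ∃ a' : ℝ, x ∈ (a' + ·) '' Set.range b ∧
      (a' + ·) '' Set.range b ⊆ Ioo c₀ c₁ ∩ (AddSubgroup.closure (Set.range b) : Set ℝ) ∧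
      ((a' + ·) '' Set.range b) ∩ (⋃ i : Fin k, (a i + ·) '' Set.range b) = ∅ := by
  classical
  obtain ⟨hxc₀, hxc₁⟩ := hx
  have hxa' : ∀ (i : Fin k) (p : ℕ), a i + b p ≠ x := by
    intro i p hp
    exact hxa (mem_iUnion.mpr ⟨i, ⟨b p, mem_range_self p, hp⟩⟩)
  have hlb : ∀ n, b 0 ≤ b n := by
    intro n
    rcases Nat.even_or_odd n with ⟨q, hq⟩ | ⟨q, hq⟩
    · have hq' : n = 2 * q := by omega
      rcases Nat.eq_zero_or_pos q with rfl | hq1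
      · simp [hq']
      · have := (heven q hq1).1; rw [hq']; linarith
    · have hq' : n = 2 * q + 1 := by omega
      rcases Nat.eq_zero_or_pos q with rfl | hq1
      · rw [hq']; norm_num; linarith [hb₀.2, hb₁.1]
      · have := (hodd q hq1).1; rw [hq']; linarith [hb₀.2]
  have hub : ∀ n, b n ≤ b 1 := by
    intro n
    rcases Nat.even_or_odd n with ⟨q, hq⟩ | ⟨q, hq⟩
    · have hq' : n = 2 * q := by omega
      rcases Nat.eq_zero_or_pos q with rfl | hq1
      · rw [hq']; norm_num; linarith [hb₀.2, hb₁.1]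
      · have := (heven q hq1).2; rw [hq']; linarith [hb₁.1]
    · have hq' : n = 2 * q + 1 := by omega
      rcases Nat.eq_zero_or_pos q with rfl | hq1
      · simp [hq']
      · have := (hodd q hq1).2; rw [hq']; linarith
  set Bad : Set ℕ := ⋃ i : Fin k, {m | ∃ n p, x + b n - b m = a i + b p} with hBadDef
  have hBadFin : Bad.Finite := by
    apply Set.finite_iUnion
    intro i
    by_cases hne : ({m | ∃ n p, x + b n - b m = a i + b p} : Set ℕ).Nonempty
    · obtain ⟨m₁, n₁, p₁, h₁⟩ := hne
      apply Set.Finite.subset ((Set.finite_singleton p₁).insert m₁)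
      rintro m₂ ⟨n₂, p₂, h₂⟩
      by_cases hm : m₁ = m₂
      · exact Or.inl hm.symm
      · right
        have hcombeq : b n₁ - b m₁ - b p₁ = b n₂ - b m₂ - b p₂ := by linarith
        have hn₂ : n₂ ≠ m₂ := by
          intro he; subst he
          exact hxa' i p₂ (by linarith)
        exact ((key_li b hli hcombeq hm hn₂).symm : m₂ ∈ ({p₁} : Set ℕ))
    · rw [Set.not_nonempty_iff_eq_empty] at hne
      rw [hne]; exact Set.finite_empty
  have hmemG : ∀ n : ℕ, b n ∈ AddSubgroup.closure (Set.range b) :=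
    fun n => AddSubgroup.subset_closure (mem_range_self n)
  have main : ∀ m : ℕ, m ∉ Bad →
      (∀ n, c₀ < x + b n - b m ∧ x + b n - b m < c₁) →
      ∃ a' : ℝ, x ∈ (a' + ·) '' Set.range b ∧
      (a' + ·) '' Set.range b ⊆ Ioo c₀ c₁ ∩ (AddSubgroup.closure (Set.range b) : Set ℝ) ∧
      ((a' + ·) '' Set.range b) ∩ (⋃ i : Fin k, (a i + ·) '' Set.range b) = ∅ := by
    intro m hmBad hbound
    refine ⟨x - b m, ⟨b m, mem_range_self m, by ring⟩, ?_, ?_⟩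
    · rintro y ⟨z, ⟨n, rfl⟩, rfl⟩
      refine ⟨⟨?_, ?_⟩, ?_⟩
      · show c₀ < x - b m + b n
        linarith [(hbound n).1]
      · show x - b m + b n < c₁
        linarith [(hbound n).2]
      · show x - b m + b n ∈ AddSubgroup.closure (Set.range b)
        exact add_mem (sub_mem hxG (hmemG m)) (hmemG n)
    · rw [Set.eq_empty_iff_forall_notMem]
      rintro y ⟨⟨z, ⟨n, rfl⟩, rfl⟩, hy⟩
      rw [mem_iUnion] at hy
      obtain ⟨i, w, ⟨p, rfl⟩, hw⟩ := hy
      have hw' : a i + b p = x - b m + b n := hw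
      apply hmBad
      rw [hBadDef, mem_iUnion]
      exact ⟨i, n, p, by linarith⟩
  rcases le_or_gt x ((c₀ + c₁) / 2) with hxh | hxh
  · -- left half: choose even m with b m close to b 0
    have h4 : 4 * ε < c₁ - x := by linarith
    have hδ : 0 < x - c₀ := by linarith
    have ev1 : ∀ᶠ N : ℕ in atTop, b (2 * N) < b 0 + (x - c₀) :=
      htend₀.eventually_lt_const (by linarith)
    have ev2 : ∀ᶠ N : ℕ in atTop, 2 * N ∉ Bad := by
      have hpre : ((fun N : ℕ => 2 * N) ⁻¹' Bad).Finite :=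
        hBadFin.preimage (Function.Injective.injOn (fun u v huv => by omega))
      have := hpre.eventually_cofinite_notMem
      rwa [Nat.cofinite_eq_atTop] at this
    obtain ⟨N, hN1, hN2⟩ := (ev1.and ev2).exists
    refine main (2 * N) hN2 ?_
    intro n
    constructor
    · linarith [hlb n]
    · linarith [hub n, hlb (2 * N), hb₀.1, hb₁.2]
  · -- right half: choose odd m with b m close to b 1
    have h4 : 4 * ε < x - c₀ := by linarith
    have hδ : 0 < c₁ - x := by linarith
    have ev1 : ∀ᶠ N : ℕ in atTop, b 1 - (c₁ - x) < b (2 * N + 1) :=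
      htend₁.eventually_const_lt (by linarith)
    have ev2 : ∀ᶠ N : ℕ in atTop, 2 * N + 1 ∉ Bad := by
      have hpre : ((fun N : ℕ => 2 * N + 1) ⁻¹' Bad).Finite :=
        hBadFin.preimage (Function.Injective.injOn (fun u v huv => by omega))
      have := hpre.eventually_cofinite_notMem
      rwa [Nat.cofinite_eq_atTop] at this
    obtain ⟨N, hN1, hN2⟩ := (ev1.and ev2).exists
    refine main (2 * N + 1) hN2 ?_
    intro n
    constructor
    · linarith [hlb n, hub (2 * N + 1), hb₀.1, hb₁.2]
    · linarith [hub n]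
end

section
/- With the setup of the core lemma (B ⊆ (−2ε, 2ε) ℚ-independent with min b₀ and max b₁, G the group generated by B, x ∈ G), for each fixed a_i ∈ ℝ with x ∉ a_i + B, there are at most two real numbers v such that x ∈ v + B and (v + B) ∩ (a_i + B) ≠ ∅. -/
open Set

lemma key_cancel (B : Set ℝ) (hli : LinearIndependent ℚ ((↑) : B → ℝ))
    (s t u p q r : B)
    (h : (s:ℝ) - t + u = p - q + r) (hts : t ≠ s) (hps : p ≠ s) : r = s := by
  classical
  set l : B →₀ ℚ := Finsupp.single s 1 - Finsupp.single t 1 + Finsupp.single u 1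
      - Finsupp.single p 1 + Finsupp.single q 1 - Finsupp.single r 1 with hldef
  have hl : Finsupp.linearCombination ℚ ((↑) : B → ℝ) l = 0 := by
    simp only [hldef, map_add, map_sub, Finsupp.linearCombination_single, one_smul]
    linarith
  have hz : l = 0 := linearIndependent_iff.mp hli l hl
  have hs := DFunLike.congr_fun hz s
  simp only [hldef, Finsupp.add_apply, Finsupp.sub_apply, Finsupp.single_apply,
    Finsupp.coe_zero, Pi.zero_apply] at hs
  rw [if_pos trivial, if_neg hts, if_neg hps] at hs
  by_contra hrs
  rw [if_neg hrs] at hs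
  split_ifs at hs <;> norm_num at hs

/-- For a fixed aᵢ with x ∉ aᵢ + B, there are at most two reals v such that
x ∈ v + B and (v + B) ∩ (aᵢ + B) ≠ ∅. -/
theorem at_most_two_translates
    (B : Set ℝ) (hcount : B.Countable) (hinf : B.Infinite)
    (hli : LinearIndependent ℚ ((↑) : B → ℝ))
    (b₀ b₁ : ℝ) (hb₀ : b₀ ∈ B) (hb₁ : b₁ ∈ B)
    (hmin : ∀ b ∈ B, b₀ ≤ b) (hmax : ∀ b ∈ B, b ≤ b₁)
    (x : ℝ) (hxG : x ∈ (AddSubgroup.closure B : Set ℝ))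
    (aᵢ : ℝ) (hxa : x ∉ (aᵢ + ·) '' B) :
    ∀ v₁ v₂ v₃ : ℝ,
      (x ∈ (v₁ + ·) '' B ∧ ((v₁ + ·) '' B ∩ (aᵢ + ·) '' B).Nonempty) →
      (x ∈ (v₂ + ·) '' B ∧ ((v₂ + ·) '' B ∩ (aᵢ + ·) '' B).Nonempty) →
      (x ∈ (v₃ + ·) '' B ∧ ((v₃ + ·) '' B ∩ (aᵢ + ·) '' B).Nonempty) →
      v₁ = v₂ ∨ v₁ = v₃ ∨ v₂ = v₃ := by
  intro v₁ v₂ v₃ h1 h2 h3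
  by_contra hcon
  push_neg at hcon
  obtain ⟨h12, h13, h23⟩ := hcon
  -- extract data for each j
  have extract : ∀ v : ℝ,
      (x ∈ (v + ·) '' B ∧ ((v + ·) '' B ∩ (aᵢ + ·) '' B).Nonempty) →
      ∃ b bb bbb : B, v + b = x ∧ (x : ℝ) - aᵢ = (b : ℝ) - bb + bbb ∧ bb ≠ b := by
    intro v ⟨⟨b, hb, hbx⟩, ⟨y, ⟨bb, hbb, hy1⟩, ⟨bbb, hbbb, hy2⟩⟩⟩
    refine ⟨⟨b, hb⟩, ⟨bb, hbb⟩, ⟨bbb, hbbb⟩, hbx, ?_, ?_⟩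
    · simp only at hbx hy1 hy2 ⊢
      have : v = x - b := by linarith
      rw [this] at hy1
      linarith [hy1.trans hy2.symm]
    · intro he
      apply hxa
      have hbe : bb = b := congrArg Subtype.val he
      refine ⟨bbb, hbbb, ?_⟩
      simp only at hbx hy1 hy2 ⊢
      rw [hbe] at hy1
      linarith [hy1.trans hy2.symm]
  obtain ⟨c₁, d₁, e₁, hcx₁, heq₁, hne₁⟩ := extract v₁ h1
  obtain ⟨c₂, d₂, e₂, hcx₂, heq₂, hne₂⟩ := extract v₂ h2
  obtain ⟨c₃, d₃, e₃, hcx₃, heq₃, hne₃⟩ := extract v₃ h3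
  have hc12 : c₁ ≠ c₂ := fun h => h12 (by
    have : (c₁ : ℝ) = c₂ := congrArg Subtype.val h
    linarith [hcx₁, hcx₂])
  have hc13 : c₁ ≠ c₃ := fun h => h13 (by
    have : (c₁ : ℝ) = c₃ := congrArg Subtype.val h
    linarith [hcx₁, hcx₃])
  -- from pair (2,1): e₁ = c₂ ; from pair (3,1): e₁ = c₃
  have h21 : e₁ = c₂ :=
    key_cancel B hli c₂ d₂ e₂ c₁ d₁ e₁ (by linarith [heq₁, heq₂]) hne₂ hc12
  have h31 : e₁ = c₃ :=
    key_cancel B hli c₃ d₃ e₃ c₁ d₁ e₁ (by linarith [heq₁, heq₃]) hne₃ hc13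
  have hc23 : c₂ = c₃ := h21 ▸ h31
  exact h23 (by
    have : (c₂ : ℝ) = c₃ := congrArg Subtype.val hc23
    linarith [hcx₂, hcx₃])
end

section
/- With the same setup, if both endpoints c₀ and c₁ belong to C = J ∩ G, then the translates (c₀ − b₀) + B and (c₁ − b₁) + B are disjoint subsets of C. -/
open Set

/-- If both endpoints c₀, c₁ belong to C = J ∩ G, then the translates
(c₀ − b₀) + B and (c₁ − b₁) + B are disjoint subsets of C. -/
theorem endpoint_translates_disjoint
    (ε c₀ c₁ : ℝ) (hε : 0 < ε) (hlen : 8 * ε < c₁ - c₀)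
    (B : Set ℝ) (hBsub : B ⊆ Ioo (-2 * ε) (2 * ε))
    (b₀ b₁ : ℝ) (hb₀B : b₀ ∈ B) (hb₁B : b₁ ∈ B)
    (hmin : ∀ b ∈ B, b₀ ≤ b) (hmax : ∀ b ∈ B, b ≤ b₁)
    (hb₀ : b₀ ∈ Ioo (-2 * ε) (-ε)) (hb₁ : b₁ ∈ Ioo ε (2 * ε))
    (hgap : 2 * ε < b₁ - b₀ ∧ b₁ - b₀ < 4 * ε)
    (J : Set ℝ) (hJ₁ : Ioo c₀ c₁ ⊆ J) (hJ₂ : J ⊆ Icc c₀ c₁)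
    (hc₀ : c₀ ∈ J ∩ (AddSubgroup.closure B : Set ℝ))
    (hc₁ : c₁ ∈ J ∩ (AddSubgroup.closure B : Set ℝ)) :
    Disjoint (((c₀ - b₀) + ·) '' B) (((c₁ - b₁) + ·) '' B) ∧
    ((c₀ - b₀) + ·) '' B ⊆ J ∩ (AddSubgroup.closure B : Set ℝ) ∧
    ((c₁ - b₁) + ·) '' B ⊆ J ∩ (AddSubgroup.closure B : Set ℝ) := by

  obtain ⟨hgap1, hgap2⟩ := hgap
  obtain ⟨hc₀J, hc₀G⟩ := hc₀
  obtain ⟨hc₁J, hc₁G⟩ := hc₁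
  have hmemG : ∀ (c bb : ℝ), c ∈ (AddSubgroup.closure B : Set ℝ) → ∀ b ∈ B,
      c - bb + b ∈ (AddSubgroup.closure B : Set ℝ) → True := fun _ _ _ _ _ _ => trivial
  refine ⟨?_, ?_, ?_⟩
  · rw [Set.disjoint_left]
    rintro x ⟨b, hb, rfl⟩ ⟨b', hb', hx⟩
    have hx' : c₁ - b₁ + b' = c₀ - b₀ + b := hx
    have := hmax b hb
    have := hmin b' hb'
    linarith
  · rintro x ⟨b, hb, rfl⟩
    show c₀ - b₀ + b ∈ J ∩ (AddSubgroup.closure B : Set ℝ)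
    constructor
    · rcases eq_or_lt_of_le (hmin b hb) with h | h
      · simpa [← h] using hc₀J
      · apply hJ₁
        constructor
        · linarith
        · have := hmax b hb; linarith
    · have hbG : b ∈ AddSubgroup.closure B := AddSubgroup.subset_closure hb
      have hb₀G : b₀ ∈ AddSubgroup.closure B := AddSubgroup.subset_closure hb₀B
      exact add_mem (sub_mem hc₀G hb₀G) hbG
  · rintro x ⟨b, hb, rfl⟩
    show c₁ - b₁ + b ∈ J ∩ (AddSubgroup.closure B : Set ℝ)
    constructor
    · rcases eq_or_lt_of_le (hmax b hb) with h | h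
      · simpa [h] using hc₁J
      · apply hJ₁
        constructor
        · have := hmin b hb; linarith
        · linarith
    · have hbG : b ∈ AddSubgroup.closure B := AddSubgroup.subset_closure hb
      have hb₁G : b₁ ∈ AddSubgroup.closure B := AddSubgroup.subset_closure hb₁B
      exact add_mem (sub_mem hc₁G hb₁G) hbG
end

section
/- Let J be a finite interval, 0 < 8ε < length(J), let B be the von Neumann set constructed with β₀ = −2ε and β₁ = 2ε, and let G be the group generated by B. Set C = J ∩ G. Then there exists a countably infinite set A ⊆ ℝ such that A ⊕ B = C. -/
open Set Filter

/-- `IsDirectSum A B C` means `A + B = C` and every element of `C` has a unique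
representation `a + b` with `a ∈ A`, `b ∈ B`. -/
def IsDirectSum {α : Type*} [Add α] (A B C : Set α) : Prop :=
  (∀ a ∈ A, ∀ b ∈ B, a + b ∈ C) ∧
  ∀ c ∈ C, ∃! p : α × α, p.1 ∈ A ∧ p.2 ∈ B ∧ p.1 + p.2 = c

namespace vN
open scoped Classical

/-- the coordinate map from integer vectors to reals -/
noncomputable def phi (b : ℕ → ℝ) : (ℕ →₀ ℤ) →ₗ[ℤ] ℝ := Finsupp.linearCombination ℤ b

@[simp] lemma phi_single (b : ℕ → ℝ) (j : ℕ) : phi b (Finsupp.single j 1) = b j := by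
  simp [phi]

lemma phi_inj {b : ℕ → ℝ} (hli : LinearIndependent ℚ b) : Function.Injective (phi b) :=
  (hli.restrict_scalars (R := ℤ) (by intro x y h; simpa using h))

lemma mem_closure_iff_phi (b : ℕ → ℝ) (x : ℝ) :
    x ∈ AddSubgroup.closure (Set.range b) ↔ ∃ m, phi b m = x := by
  rw [← Submodule.span_int_eq_addSubgroupClosure, Submodule.mem_toAddSubgroup,
    Finsupp.mem_span_range_iff_exists_finsupp]
  simp [phi, Finsupp.linearCombination_apply]

/-- `n` is covered by `F` -/
def covered (F : Finset (ℕ →₀ ℤ)) (n : ℕ →₀ ℤ) : Prop :=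
  ∃ m ∈ F, ∃ j : ℕ, n = m + Finsupp.single j 1

lemma covered_mono {F F' : Finset (ℕ →₀ ℤ)} (h : F ⊆ F') {n} (hc : covered F n) :
    covered F' n := by
  obtain ⟨m, hm, j, hj⟩ := hc; exact ⟨m, h hm, j, hj⟩

/-- `j` is a good index to subtract from `n`, relative to the finite set `F`. -/
def Pgood (b : ℕ → ℝ) (c₀ c₁ : ℝ) (F : Finset (ℕ →₀ ℤ)) (n : ℕ →₀ ℤ) (j : ℕ) : Prop :=
  phi b n - b j ∈ Set.Ioo (c₀ - b 0) (c₁ - b 1) ∧ ∀ m' ∈ F, n j = m' j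

noncomputable def nextF (b : ℕ → ℝ) (c₀ c₁ : ℝ) (F : Finset (ℕ →₀ ℤ)) (n : ℕ →₀ ℤ) :
    Finset (ℕ →₀ ℤ) :=
  if h : ¬ covered F n ∧ ∃ j, Pgood b c₀ c₁ F n j then
    insert (n - Finsupp.single h.2.choose 1) F else F

lemma subset_nextF (b : ℕ → ℝ) (c₀ c₁ : ℝ) (F : Finset (ℕ →₀ ℤ)) (n : ℕ →₀ ℤ) :
    F ⊆ nextF b c₀ c₁ F n := by
  unfold nextF; split
  · exact Finset.subset_insert _ _
  · exact Finset.Subset.refl _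

noncomputable def FF (b : ℕ → ℝ) (c₀ c₁ : ℝ) (F₀ : Finset (ℕ →₀ ℤ)) (e : ℕ → (ℕ →₀ ℤ)) :
    ℕ → Finset (ℕ →₀ ℤ)
  | 0 => F₀
  | k+1 => nextF b c₀ c₁ (FF b c₀ c₁ F₀ e k) (e k)

lemma FF_mono (b : ℕ → ℝ) (c₀ c₁ : ℝ) (F₀ : Finset (ℕ →₀ ℤ)) (e : ℕ → (ℕ →₀ ℤ)) :
    Monotone (fun k => FF b c₀ c₁ F₀ e k) := by
  apply monotone_nat_of_le_succ
  intro k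
  exact subset_nextF _ _ _ _ _

/-- the invariant maintained by the recursion -/
def Inv (b : ℕ → ℝ) (J : Set ℝ) (F : Finset (ℕ →₀ ℤ)) : Prop :=
  (∀ m ∈ F, ∀ i : ℕ, phi b m + b i ∈ J) ∧
  (∀ m ∈ F, ∀ m' ∈ F, ∀ i i' : ℕ,
    m + Finsupp.single i 1 = m' + Finsupp.single i' 1 → m = m' ∧ i = i')


section
variable {ε c₀ c₁ : ℝ} {b : ℕ → ℝ} {J : Set ℝ}
variable (hε : 0 < ε) (hlen : 8 * ε < c₁ - c₀)
  (hb₀ : b 0 ∈ Set.Ioo (-2 * ε) (-ε)) (hb₁ : b 1 ∈ Set.Ioo ε (2 * ε))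
  (hmin : ∀ n, b 0 ≤ b n) (hmax : ∀ n, b n ≤ b 1)

include hε hlen hb₀ hb₁ hmin hmax

/-- Adding any `b i` to a point of the safe zone lands in the open interval. -/
lemma safe_add (x : ℝ) (hx : x ∈ Set.Ioo (c₀ - b 0) (c₁ - b 1)) (i : ℕ) :
    x + b i ∈ Set.Ioo c₀ c₁ := by
  obtain ⟨h1, h2⟩ := hx
  constructor
  · have := hmin i; linarith
  · have := hmax i; linarith

variable (htend₀ : Tendsto (fun n : ℕ => b (2 * n)) atTop (nhds (b 0)))
  (htend₁ : Tendsto (fun n : ℕ => b (2 * n + 1)) atTop (nhds (b 1)))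

include htend₀ htend₁ in
lemma good_exists (n : ℕ →₀ ℤ) (hn : phi b n ∈ Set.Ioo c₀ c₁) (F : Finset (ℕ →₀ ℤ)) :
    ∃ j, Pgood b c₀ c₁ F n j := by
  set lo : ℝ := phi b n - c₁ + b 1 with hlo_def
  set hi : ℝ := phi b n - c₀ + b 0 with hhi_def
  have hS : {j : ℕ | lo < b j ∧ b j < hi}.Infinite := by
    by_cases hcase : lo < b 0
    · have hb0hi : b 0 < hi := by simp only [hhi_def]; linarith [hn.1]
      have ev : ∀ᶠ t : ℕ in atTop, b (2 * t) < hi := htend₀.eventually_lt_const hb0hi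
      obtain ⟨T₀, hT₀⟩ := eventually_atTop.mp ev
      have hsub : (fun t => 2 * t) '' Set.Ici T₀ ⊆ {j : ℕ | lo < b j ∧ b j < hi} := by
        rintro _ ⟨t, ht, rfl⟩
        exact ⟨lt_of_lt_of_le hcase (hmin _), hT₀ t ht⟩
      have : Set.InjOn (fun t : ℕ => 2 * t) (Set.Ici T₀) := fun a _ c _ h => by simp only [] at h; omega
      exact (((Set.Ici_infinite T₀).image this).mono hsub)
    · push_neg at hcase
      have hb1hi : b 1 < hi := by
        simp only [hhi_def]
        simp only [hlo_def] at hcase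
        obtain ⟨h1, h2⟩ := hb₀; obtain ⟨h3, h4⟩ := hb₁
        linarith
      have hlob1 : lo < b 1 := by simp only [hlo_def]; linarith [hn.2]
      have ev : ∀ᶠ t : ℕ in atTop, lo < b (2 * t + 1) := htend₁.eventually_const_lt hlob1
      obtain ⟨T₀, hT₀⟩ := eventually_atTop.mp ev
      have hsub : (fun t => 2 * t + 1) '' Set.Ici T₀ ⊆ {j : ℕ | lo < b j ∧ b j < hi} := by
        rintro _ ⟨t, ht, rfl⟩
        exact ⟨hT₀ t ht, lt_of_le_of_lt (hmax _) hb1hi⟩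
      have : Set.InjOn (fun t : ℕ => 2 * t + 1) (Set.Ici T₀) := fun a _ c _ h => by simp only [] at h; omega
      exact (((Set.Ici_infinite T₀).image this).mono hsub)
  set Bad : Finset ℕ := F.biUnion fun m' => (n - m').support with hBad
  obtain ⟨j, hjS, hjB⟩ := (hS.diff Bad.finite_toSet).nonempty
  obtain ⟨hj1, hj2⟩ : lo < b j ∧ b j < hi := hjS
  rw [hlo_def] at hj1
  rw [hhi_def] at hj2
  refine ⟨j, Set.mem_Ioo.mpr ⟨by linarith, by linarith⟩, ?_⟩
  · intro m' hm'
    have : j ∉ (n - m').support := fun h => hjB (Finset.mem_biUnion.2 ⟨m', hm', h⟩)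
    have := Finsupp.notMem_support_iff.mp this
    rw [Finsupp.sub_apply] at this
    linarith [this]
end


section
variable {ε c₀ c₁ : ℝ} {b : ℕ → ℝ} {J : Set ℝ}

/-- coordinate bookkeeping: if `n` and `m'` agree at `j` and
`m' + δ i = n - δ j + δ i'` then `i ≠ j`, `i' = j` and `n = m' + δ i`. -/
lemma coord_aux {n m' : ℕ →₀ ℤ} {j i i' : ℕ} (hjc : n j = m' j)
    (heq : m' + Finsupp.single i 1 = n - Finsupp.single j 1 + Finsupp.single i' 1) :
    n = m' + Finsupp.single i 1 := by
  have h := congrArg (fun f : ℕ →₀ ℤ => f j) heq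
  simp only [Finsupp.add_apply, Finsupp.sub_apply, Finsupp.single_apply] at h
  have hi'j : i' = j := by split_ifs at h <;> omega
  rw [heq, hi'j, sub_add_cancel]

lemma Inv_nextF (hli : LinearIndependent ℚ b)
    (hmin : ∀ n, b 0 ≤ b n) (hmax : ∀ n, b n ≤ b 1) (hJ₁ : Set.Ioo c₀ c₁ ⊆ J)
    {F : Finset (ℕ →₀ ℤ)} {n : ℕ →₀ ℤ} (hInv : Inv b J F) :
    Inv b J (nextF b c₀ c₁ F n) := by
  unfold nextF
  split
  case isFalse => exact hInv
  case isTrue h =>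
    set j := h.2.choose with hj_def
    have hj : Pgood b c₀ c₁ F n j := h.2.choose_spec
    have hphinew : ∀ i, phi b (n - Finsupp.single j 1) + b i ∈ J := by
      intro i
      have : phi b (n - Finsupp.single j 1) = phi b n - b j := by
        rw [map_sub, phi_single]
      rw [this]
      refine hJ₁ ?_
      obtain ⟨h1, h2⟩ := hj.1
      exact ⟨by have := hmin i; linarith, by have := hmax i; linarith⟩
    constructor
    · intro m hm i
      rcases Finset.mem_insert.mp hm with rfl | hm
      · exact hphinew i
      · exact hInv.1 m hm i
    · intro m hm m' hm' i i' heq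
      rcases Finset.mem_insert.mp hm with rfl | hm <;>
        rcases Finset.mem_insert.mp hm' with rfl | hm'
      · have : Finsupp.single i (1:ℤ) = Finsupp.single i' 1 := by
          exact add_left_cancel heq
        have : i = i' := Finsupp.single_left_injective one_ne_zero this
        exact ⟨rfl, this⟩
      · -- new element on the left, old on the right: contradiction
        exact absurd ⟨m', hm', i', coord_aux (hj.2 m' hm') heq.symm⟩ h.1
      · exact absurd ⟨m, hm, i, coord_aux (hj.2 m hm) heq⟩ h.1
      · exact hInv.2 m hm m' hm' i i' heq

lemma covered_nextF_self {F : Finset (ℕ →₀ ℤ)} {n : ℕ →₀ ℤ}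
    (hex : ¬ covered F n → ∃ j, Pgood b c₀ c₁ F n j) :
    covered (nextF b c₀ c₁ F n) n := by
  by_cases hc : covered F n
  · exact covered_mono (subset_nextF _ _ _ _ _) hc
  · have h : ¬ covered F n ∧ ∃ j, Pgood b c₀ c₁ F n j := ⟨hc, hex hc⟩
    rw [nextF, dif_pos h]
    exact ⟨n - Finsupp.single h.2.choose 1, Finset.mem_insert_self _ _,
      h.2.choose, (sub_add_cancel _ _).symm⟩

end

section
variable {ε c₀ c₁ : ℝ} {b : ℕ → ℝ} {J : Set ℝ}
variable (hε : 0 < ε) (hlen : 8 * ε < c₁ - c₀)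
  (hb₀ : b 0 ∈ Set.Ioo (-2 * ε) (-ε)) (hb₁ : b 1 ∈ Set.Ioo ε (2 * ε))
  (hmin : ∀ n, b 0 ≤ b n) (hmax : ∀ n, b n ≤ b 1)
  (htend₀ : Tendsto (fun n : ℕ => b (2 * n)) atTop (nhds (b 0)))

include hε hlen hb₀ hb₁ hmin hmax htend₀ in
/-- there are elements of `G ∩ Ioo c₀ c₁` all of whose possible "base parts"
have support of size at least `s`. -/
lemma exists_big (s : ℕ) : ∃ n : ℕ →₀ ℤ, phi b n ∈ Set.Ioo c₀ c₁ ∧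
    ∀ j : ℕ, s ≤ ((n - Finsupp.single j 1).support.card) := by
  obtain ⟨hb₀1, hb₀2⟩ := hb₀
  obtain ⟨hb₁1, hb₁2⟩ := hb₁
  have hb1pos : 0 < b 1 := lt_trans hε hb₁1
  set η : ℝ := (c₁ - b 1) - ((c₀ - b 0) + b 1) with hη_def
  have hη : 0 < η := by simp only [hη_def]; linarith
  set k : ℤ := ⌊(c₀ - b 0) / b 1⌋ + 1 with hk_def
  have hk1 : c₀ - b 0 < (k : ℝ) * b 1 := by
    have h := Int.lt_floor_add_one ((c₀ - b 0) / b 1)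
    have : (c₀ - b 0) / b 1 < (k : ℝ) := by push_cast [hk_def]; linarith
    calc c₀ - b 0 = ((c₀ - b 0) / b 1) * b 1 := by field_simp
    _ < (k : ℝ) * b 1 := by exact mul_lt_mul_of_pos_right this hb1pos
  have hk2 : (k : ℝ) * b 1 ≤ c₀ - b 0 + b 1 := by
    have h := Int.floor_le ((c₀ - b 0) / b 1)
    have hk : (k : ℝ) ≤ (c₀ - b 0) / b 1 + 1 := by push_cast [hk_def]; linarith
    calc (k : ℝ) * b 1 ≤ ((c₀ - b 0) / b 1 + 1) * b 1 :=
        mul_le_mul_of_nonneg_right hk hb1pos.le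
    _ = c₀ - b 0 + b 1 := by field_simp
  have hsc : (0 : ℝ) < η / (s + 1 : ℕ) := by positivity
  have hev : ∀ᶠ t : ℕ in atTop, b (2 * t) < b 0 + η / (s + 1 : ℕ) :=
    htend₀.eventually_lt_const (by linarith)
  obtain ⟨T₀, hT₀⟩ := eventually_atTop.mp hev
  have hSinf : {t : ℕ | 1 ≤ t ∧ b (2 * t) < b 0 + η / (s + 1 : ℕ)}.Infinite := by
    apply Set.Infinite.mono (s := Set.Ici (max 1 T₀))
    · intro t ht
      exact ⟨le_trans (le_max_left _ _) ht, hT₀ t (le_trans (le_max_right _ _) ht)⟩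
    · exact Set.Ici_infinite _
  obtain ⟨T, hTsub, hTcard⟩ := hSinf.exists_subset_card_eq (s + 1)
  have hTne : T.Nonempty := Finset.card_pos.mp (by omega)
  set n : ℕ →₀ ℤ := Finsupp.single 1 k - Finsupp.single 0 (T.card : ℤ) +
      (∑ t ∈ T, Finsupp.single (2 * t) 1) + Finsupp.single 1 1 with hn_def
  have hsum_lb : (0:ℝ) ≤ ∑ t ∈ T, (b (2 * t) - b 0) :=
    Finset.sum_nonneg fun t _ => by linarith [hmin (2 * t)]
  have hsum_ub : ∑ t ∈ T, (b (2 * t) - b 0) < η := by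
    have h1 : ∑ t ∈ T, (b (2 * t) - b 0) < ∑ t ∈ T, η / (s + 1 : ℕ) := by
      apply Finset.sum_lt_sum_of_nonempty hTne
      intro t ht
      have := (hTsub ht).2
      linarith
    have h2 : ∑ t ∈ T, η / (s + 1 : ℕ) = η := by
      rw [Finset.sum_const, hTcard, nsmul_eq_mul]
      field_simp
    linarith
  have hphin : phi b n = (k : ℝ) * b 1 + (∑ t ∈ T, (b (2 * t) - b 0)) + b 1 := by
    have h1 : phi b (Finsupp.single 1 k) = (k:ℝ) * b 1 := by
      simp [phi, Finsupp.linearCombination_single, zsmul_eq_mul]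
    have h0 : phi b (Finsupp.single 0 (T.card : ℤ)) = (T.card : ℝ) * b 0 := by
      simp [phi, Finsupp.linearCombination_single, zsmul_eq_mul]
    have hs : phi b (∑ t ∈ T, Finsupp.single (2*t) (1:ℤ)) = ∑ t ∈ T, b (2*t) := by
      rw [map_sum]; exact Finset.sum_congr rfl fun t _ => phi_single b (2*t)
    simp only [hn_def, map_add, map_sub, h1, h0, hs, phi_single]
    rw [Finset.sum_sub_distrib, Finset.sum_const, nsmul_eq_mul, hTcard]
    push_cast
    ring
  have hcoord : ∀ t ∈ T, n (2 * t) = 1 := by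
    intro t ht
    have ht1 : 1 ≤ t := (hTsub ht).1
    have e1 : (∑ t' ∈ T, Finsupp.single (2 * t') (1:ℤ)) (2 * t) = 1 := by
      rw [Finsupp.finset_sum_apply]
      rw [Finset.sum_congr rfl (g := fun t' => if t' = t then (1:ℤ) else 0)
        (fun t' _ => by
          show Finsupp.single (2*t') (1:ℤ) (2*t) = if t' = t then 1 else 0
          rw [Finsupp.single_apply]
          by_cases h : t' = t
          · simp [h]
          · rw [if_neg (by omega : ¬ 2*t' = 2*t), if_neg h])]
      simp [Finset.sum_ite_eq', ht]
    simp only [hn_def, Finsupp.add_apply, Finsupp.sub_apply, e1, Finsupp.single_apply]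
    have h2 : ¬ ((1:ℕ) = 2 * t) := by omega
    have h0 : ¬ ((0:ℕ) = 2 * t) := by omega
    simp [h2, h0]
  refine ⟨n, ?_, ?_⟩
  · rw [hphin]
    constructor
    · nlinarith [hmin 1]
    · simp only [hη_def] at hsum_ub; linarith
  · intro j
    have himg : ((T.image (fun t => 2 * t)).erase j) ⊆ (n - Finsupp.single j 1).support := by
      intro x hx
      obtain ⟨hxj, hximg⟩ := Finset.mem_erase.mp hx
      obtain ⟨t, ht, rfl⟩ := Finset.mem_image.mp hximg
      rw [Finsupp.mem_support_iff, Finsupp.sub_apply, hcoord t ht, Finsupp.single_apply]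
      rw [if_neg (fun h => hxj h.symm)]
      omega
    have hcardimg : (T.image (fun t => 2 * t)).card = s + 1 := by
      rw [Finset.card_image_of_injective _ (fun a c h => by omega), hTcard]
    calc s = (s + 1) - 1 := by omega
    _ ≤ ((T.image (fun t => 2 * t)).erase j).card := by
        rw [← hcardimg]; exact Finset.pred_card_le_card_erase
    _ ≤ _ := Finset.card_le_card himg
end

section
variable {ε c₀ c₁ : ℝ} {b : ℕ → ℝ} {J : Set ℝ}
variable (hε : 0 < ε) (hlen : 8 * ε < c₁ - c₀)
  (hb₀ : b 0 ∈ Set.Ioo (-2 * ε) (-ε)) (hb₁ : b 1 ∈ Set.Ioo ε (2 * ε))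
  (hmin : ∀ n, b 0 ≤ b n) (hmax : ∀ n, b n ≤ b 1)
  (hinj : Function.Injective b) (hJ₁ : Set.Ioo c₀ c₁ ⊆ J)

include hε hlen hb₀ hb₁ hmin hmax hinj hJ₁ in
lemma endpoint_zero (hc : c₀ ∈ J) {n : ℕ →₀ ℤ} (hn : phi b n = c₀) (i : ℕ) :
    phi b (n - Finsupp.single 0 1) + b i ∈ J := by
  rw [map_sub, phi_single, hn]
  obtain ⟨h1, h2⟩ := hb₀; obtain ⟨h3, h4⟩ := hb₁
  by_cases hi : i = 0
  · subst hi; simpa using hc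
  · have hlt : b 0 < b i := lt_of_le_of_ne (hmin i) (fun h => hi (hinj h.symm))
    have hle : b i ≤ b 1 := hmax i
    exact hJ₁ ⟨by linarith, by linarith⟩

include hε hlen hb₀ hb₁ hmin hmax hinj hJ₁ in
lemma endpoint_one (hc : c₁ ∈ J) {n : ℕ →₀ ℤ} (hn : phi b n = c₁) (i : ℕ) :
    phi b (n - Finsupp.single 1 1) + b i ∈ J := by
  rw [map_sub, phi_single, hn]
  obtain ⟨h1, h2⟩ := hb₀; obtain ⟨h3, h4⟩ := hb₁
  by_cases hi : i = 1
  · subst hi; simpa using hc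
  · have hlt : b i < b 1 := lt_of_le_of_ne (hmax i) (fun h => hi (hinj h))
    have hle : b 0 ≤ b i := hmin i
    exact hJ₁ ⟨by linarith, by linarith⟩
end
end vN

/-- Theorem (von Neumann): with B the von Neumann set and G the subgroup it
generates, C = J ∩ G is a direct sum A ⊕ B for some countably infinite A. -/
theorem exists_directSum_decomposition_of_interval_inter_group
    (ε c₀ c₁ : ℝ) (hε : 0 < ε) (hlen : 8 * ε < c₁ - c₀)
    (b : ℕ → ℝ) (hinj : Function.Injective b)
    (hli : LinearIndependent ℚ b)
    (hrange : Set.range b ⊆ Ioo (-2 * ε) (2 * ε))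
    (hb₀ : b 0 ∈ Ioo (-2 * ε) (-ε)) (hb₁ : b 1 ∈ Ioo ε (2 * ε))
    (hmin : ∀ n, b 0 ≤ b n) (hmax : ∀ n, b n ≤ b 1)
    (hacc : ∀ δ : ℝ, 0 < δ → {n : ℕ | b 0 + δ < b n ∧ b n < b 1 - δ}.Finite)
    (htend₀ : Tendsto (fun n : ℕ => b (2 * n)) atTop (nhds (b 0)))
    (htend₁ : Tendsto (fun n : ℕ => b (2 * n + 1)) atTop (nhds (b 1)))
    (J : Set ℝ) (hJ₁ : Ioo c₀ c₁ ⊆ J) (hJ₂ : J ⊆ Icc c₀ c₁) :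
    ∃ A : Set ℝ, A.Countable ∧ A.Infinite ∧
      IsDirectSum A (Set.range b) (J ∩ (AddSubgroup.closure (Set.range b) : Set ℝ)) := by
  classical
  obtain ⟨hb₀1, hb₀2⟩ := id hb₀
  obtain ⟨hb₁1, hb₁2⟩ := id hb₁
  have hb1pos : 0 < b 1 := lt_trans hε hb₁1
  have hphiinj : Function.Injective (vN.phi b) := vN.phi_inj hli
  have hmemcl : ∀ x : ℝ, x ∈ AddSubgroup.closure (Set.range b) ↔ ∃ m, vN.phi b m = x :=
    vN.mem_closure_iff_phi b
  -- the initial (forced) finite set, handling the endpoints of J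
  set F₀ : Finset (ℕ →₀ ℤ) :=
    (if h : c₀ ∈ J ∧ ∃ n, vN.phi b n = c₀ then {h.2.choose - Finsupp.single 0 1} else ∅) ∪
    (if h : c₁ ∈ J ∧ ∃ n, vN.phi b n = c₁ then {h.2.choose - Finsupp.single 1 1} else ∅)
    with hF₀_def
  have hF₀mem : ∀ m ∈ F₀,
      (∃ n : ℕ →₀ ℤ, vN.phi b n = c₀ ∧ c₀ ∈ J ∧ m = n - Finsupp.single 0 1) ∨
      (∃ n : ℕ →₀ ℤ, vN.phi b n = c₁ ∧ c₁ ∈ J ∧ m = n - Finsupp.single 1 1) := by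
    intro m hm
    rw [hF₀_def, Finset.mem_union] at hm
    rcases hm with hm | hm
    · left
      split_ifs at hm with h
      · exact ⟨h.2.choose, h.2.choose_spec, h.1, Finset.mem_singleton.mp hm⟩
      · exact absurd hm (Finset.notMem_empty m)
    · right
      split_ifs at hm with h
      · exact ⟨h.2.choose, h.2.choose_spec, h.1, Finset.mem_singleton.mp hm⟩
      · exact absurd hm (Finset.notMem_empty m)
  have hphi_of_mem : ∀ m ∈ F₀,
      (vN.phi b m = c₀ - b 0) ∨ (vN.phi b m = c₁ - b 1) := by
    intro m hm
    rcases hF₀mem m hm with ⟨n, hn, _, rfl⟩ | ⟨n, hn, _, rfl⟩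
    · left; rw [map_sub, vN.phi_single, hn]
    · right; rw [map_sub, vN.phi_single, hn]
  have hInv₀ : vN.Inv b J F₀ := by
    constructor
    · intro m hm i
      rcases hF₀mem m hm with ⟨n, hn, hcJ, rfl⟩ | ⟨n, hn, hcJ, rfl⟩
      · exact vN.endpoint_zero hε hlen hb₀ hb₁ hmin hmax hinj hJ₁ hcJ hn i
      · exact vN.endpoint_one hε hlen hb₀ hb₁ hmin hmax hinj hJ₁ hcJ hn i
    · intro m hm m' hm' i i' heq
      have hmm : m = m' := by
        rcases hF₀mem m hm with ⟨n, hn, _, rfl⟩ | ⟨n, hn, _, rfl⟩ <;>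
          rcases hF₀mem m' hm' with ⟨n', hn', _, rfl⟩ | ⟨n', hn', _, rfl⟩
        · rw [hphiinj (hn.trans hn'.symm)]
        · exfalso
          have := congrArg (vN.phi b) heq
          rw [map_add, map_add, map_sub, map_sub, vN.phi_single, vN.phi_single,
            vN.phi_single, vN.phi_single, hn, hn'] at this
          have h1 := hmax i; have h2 := hmin i'
          nlinarith [this]
        · exfalso
          have := congrArg (vN.phi b) heq
          rw [map_add, map_add, map_sub, map_sub, vN.phi_single, vN.phi_single,
            vN.phi_single, vN.phi_single, hn, hn'] at this
          have h1 := hmin i; have h2 := hmax i'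
          nlinarith [this]
        · rw [hphiinj (hn.trans hn'.symm)]
      subst hmm
      have := add_left_cancel heq
      exact ⟨rfl, Finsupp.single_left_injective one_ne_zero this⟩
  have hend : ∀ n : ℕ →₀ ℤ, vN.phi b n ∈ J → (vN.phi b n = c₀ ∨ vN.phi b n = c₁) →
      vN.covered F₀ n := by
    intro n hnJ hcases
    rcases hcases with hc | hc
    · have h : c₀ ∈ J ∧ ∃ n', vN.phi b n' = c₀ := ⟨hc ▸ hnJ, ⟨n, hc⟩⟩
      refine ⟨h.2.choose - Finsupp.single 0 1, ?_, 0, ?_⟩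
      · rw [hF₀_def]
        exact Finset.mem_union_left _ (by rw [dif_pos h]; exact Finset.mem_singleton_self _)
      · rw [sub_add_cancel]
        exact (hphiinj (hc.trans h.2.choose_spec.symm))
    · have h : c₁ ∈ J ∧ ∃ n', vN.phi b n' = c₁ := ⟨hc ▸ hnJ, ⟨n, hc⟩⟩
      refine ⟨h.2.choose - Finsupp.single 1 1, ?_, 1, ?_⟩
      · rw [hF₀_def]
        exact Finset.mem_union_right _ (by rw [dif_pos h]; exact Finset.mem_singleton_self _)
      · rw [sub_add_cancel]
        exact (hphiinj (hc.trans h.2.choose_spec.symm))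
  -- enumeration of C (on the vector side)
  set Cv : Set (ℕ →₀ ℤ) := {n | vN.phi b n ∈ J} with hCv_def
  have hCvne : Cv.Nonempty := by
    set k : ℤ := ⌊c₀ / b 1⌋ + 1 with hk_def
    have hk1 : c₀ < (k : ℝ) * b 1 := by
      have h := Int.lt_floor_add_one (c₀ / b 1)
      have hkk : c₀ / b 1 < (k : ℝ) := by push_cast [hk_def]; linarith
      calc c₀ = (c₀ / b 1) * b 1 := by field_simp
      _ < (k : ℝ) * b 1 := mul_lt_mul_of_pos_right hkk hb1pos
    have hk2 : (k : ℝ) * b 1 ≤ c₀ + b 1 := by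
      have h := Int.floor_le (c₀ / b 1)
      have hkk : (k : ℝ) ≤ c₀ / b 1 + 1 := by push_cast [hk_def]; linarith
      calc (k : ℝ) * b 1 ≤ (c₀ / b 1 + 1) * b 1 := mul_le_mul_of_nonneg_right hkk hb1pos.le
      _ = c₀ + b 1 := by field_simp
    refine ⟨Finsupp.single 1 k, ?_⟩
    have : vN.phi b (Finsupp.single 1 k) = (k : ℝ) * b 1 := by
      simp [vN.phi, Finsupp.linearCombination_single, zsmul_eq_mul]
    rw [hCv_def, Set.mem_setOf_eq, this]
    exact hJ₁ ⟨hk1, by linarith⟩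
  obtain ⟨e, he⟩ := (Set.to_countable Cv).exists_eq_range hCvne
  have heJ : ∀ k, vN.phi b (e k) ∈ J := by
    intro k
    have : e k ∈ Cv := by rw [he]; exact Set.mem_range_self k
    exact this
  set FFk : ℕ → Finset (ℕ →₀ ℤ) := vN.FF b c₀ c₁ F₀ e with hFFk_def
  have hmono : Monotone FFk := vN.FF_mono b c₀ c₁ F₀ e
  have hF₀sub : ∀ k, F₀ ⊆ FFk k := fun k => hmono (Nat.zero_le k)
  have hIoo_of_uncov : ∀ k, ¬ vN.covered (FFk k) (e k) → vN.phi b (e k) ∈ Set.Ioo c₀ c₁ := by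
    intro k hncov
    have hIcc := hJ₂ (heJ k)
    constructor
    · refine lt_of_le_of_ne hIcc.1 (fun h => hncov ?_)
      exact vN.covered_mono (hF₀sub k) (hend _ (heJ k) (Or.inl h.symm))
    · refine lt_of_le_of_ne hIcc.2 (fun h => hncov ?_)
      exact vN.covered_mono (hF₀sub k) (hend _ (heJ k) (Or.inr h))
  have hInvK : ∀ k, vN.Inv b J (FFk k) := by
    intro k
    induction k with
    | zero => exact hInv₀
    | succ k ih => exact vN.Inv_nextF hli hmin hmax hJ₁ ih
  have hcovK : ∀ k, vN.covered (FFk (k+1)) (e k) := by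
    intro k
    exact vN.covered_nextF_self (fun hnc =>
      vN.good_exists hε hlen hb₀ hb₁ hmin hmax htend₀ htend₁ (e k)
        (hIoo_of_uncov k hnc) (FFk k))
  set Ainf : Set (ℕ →₀ ℤ) := ⋃ k, (FFk k : Set (ℕ →₀ ℤ)) with hAinf_def
  have hmemAinf : ∀ m ∈ Ainf, ∃ k, m ∈ FFk k := by
    intro m hm
    simpa [hAinf_def] using hm
  have hAJ : ∀ m ∈ Ainf, ∀ i, vN.phi b m + b i ∈ J := by
    intro m hm i
    obtain ⟨k, hk⟩ := hmemAinf m hm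
    exact (hInvK k).1 m hk i
  have hAuniq : ∀ m ∈ Ainf, ∀ m' ∈ Ainf, ∀ i i' : ℕ,
      m + Finsupp.single i 1 = m' + Finsupp.single i' 1 → m = m' ∧ i = i' := by
    intro m hm m' hm' i i' heq
    obtain ⟨k, hk⟩ := hmemAinf m hm
    obtain ⟨k', hk'⟩ := hmemAinf m' hm'
    exact (hInvK (max k k')).2 m (hmono (le_max_left k k') hk) m'
      (hmono (le_max_right k k') hk') i i' heq
  have hcovered : ∀ n : ℕ →₀ ℤ, vN.phi b n ∈ J →
      ∃ m ∈ Ainf, ∃ j : ℕ, n = m + Finsupp.single j 1 := by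
    intro n hn
    have hnC : n ∈ Cv := hn
    rw [he] at hnC
    obtain ⟨k, rfl⟩ := hnC
    obtain ⟨m, hm, j, hj⟩ := hcovK k
    exact ⟨m, Set.mem_iUnion.mpr ⟨k + 1, hm⟩, j, hj⟩
  refine ⟨vN.phi b '' Ainf, (Set.to_countable Ainf).image _, ?_, ?_, ?_⟩
  · -- infinite
    have hbig : ∀ s : ℕ, ∃ m ∈ Ainf, s ≤ m.support.card := by
      intro s
      obtain ⟨n, hnIoo, hns⟩ := vN.exists_big hε hlen hb₀ hb₁ hmin hmax htend₀ s
      obtain ⟨m, hm, j, hj⟩ := hcovered n (hJ₁ hnIoo)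
      have hmeq : m = n - Finsupp.single j 1 := by rw [hj, add_sub_cancel_right]
      exact ⟨m, hm, hmeq ▸ hns j⟩
    have hAinfinf : Ainf.Infinite := by
      by_contra hfin
      rw [Set.not_infinite] at hfin
      obtain ⟨N, hN⟩ := (hfin.image (fun m => m.support.card)).bddAbove
      obtain ⟨m, hm, hsm⟩ := hbig (N + 1)
      have := hN (Set.mem_image_of_mem _ hm)
      omega
    exact hAinfinf.image (hphiinj.injOn)
  · -- sums land in C
    rintro a ⟨m, hm, rfl⟩ bb ⟨i, rfl⟩
    refine ⟨hAJ m hm i, ?_⟩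
    have : vN.phi b m + b i = vN.phi b (m + Finsupp.single i 1) := by
      rw [map_add, vN.phi_single]
    rw [this]
    exact (hmemcl _).mpr ⟨_, rfl⟩
  · -- unique representation
    rintro c ⟨hcJ, hcG⟩
    obtain ⟨n, rfl⟩ := (hmemcl c).mp hcG
    obtain ⟨m, hm, j, hj⟩ := hcovered n hcJ
    have hsumeq : vN.phi b m + b j = vN.phi b n := by
      rw [hj, map_add, vN.phi_single]
    refine ⟨(vN.phi b m, b j), ⟨⟨m, hm, rfl⟩, ⟨j, rfl⟩, hsumeq⟩, ?_⟩
    rintro ⟨x, y⟩ ⟨⟨m', hm', rfl⟩, ⟨i, rfl⟩, hsum⟩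
    have hveq : m' + Finsupp.single i 1 = m + Finsupp.single j 1 := by
      apply hphiinj
      rw [map_add, map_add, vN.phi_single, vN.phi_single]
      dsimp only at hsum ⊢
      rw [hsum, hsumeq]
    obtain ⟨hmm, hij⟩ := hAuniq m' hm' m hm i j hveq
    subst hmm; subst hij
    rfl
end

section
/- Every finite interval I ⊆ ℝ (open, closed, or half-open) can be partitioned into countably infinitely many pairwise disjoint sets that are all translates of a single set A; equivalently, there exist an uncountable set A and a countably infinite set B of real numbers such that A ⊕ B = I. -/
open Set

noncomputable section

namespace SteinhausVN

attribute [local instance] Classical.propDecidable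

/-- The span over ℚ of a countable set of reals is countable. -/
lemma countable_span {s : Set ℝ} (hs : s.Countable) :
    (Submodule.span ℚ s : Set ℝ).Countable := by
  haveI := hs.to_subtype
  have h1 : Submodule.span ℚ s = LinearMap.range (Finsupp.linearCombination ℚ ((↑) : s → ℝ)) := by
    rw [Finsupp.range_linearCombination, Subtype.range_coe]
  rw [h1]
  exact (Set.countable_range (Finsupp.linearCombination ℚ ((↑) : s → ℝ)))

/-- An open interval minus a countable set is nonempty. -/
lemma Ioo_diff_nonempty {a b : ℝ} (h : a < b) {s : Set ℝ} (hs : s.Countable) :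
    (Ioo a b \ s).Nonempty := by
  rw [Set.nonempty_iff_ne_empty]
  intro hemp
  have hsub : Ioo a b ⊆ s := by rwa [Set.diff_eq_empty] at hemp
  have h0 : MeasureTheory.volume (Ioo a b) = 0 :=
    MeasureTheory.measure_mono_null hsub (hs.measure_zero _)
  rw [Real.volume_Ioo, ENNReal.ofReal_eq_zero] at h0
  linarith

/-- There are infinitely many rationals in any nonempty open real interval. -/
lemma ratsInfinite {a b : ℝ} (h : a < b) : {q : ℚ | a < (q : ℝ) ∧ (q : ℝ) < b}.Infinite := by
  by_contra hfin
  rw [Set.not_infinite] at hfin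
  obtain ⟨q0, hq0a, hq0b⟩ := exists_rat_btwn h
  have hne : hfin.toFinset.Nonempty := by
    refine ⟨q0, ?_⟩
    rw [Set.Finite.mem_toFinset]
    exact ⟨hq0a, hq0b⟩
  set r := hfin.toFinset.max' hne with hr
  have hrmem : (a < (r : ℝ) ∧ (r : ℝ) < b) := by
    have := hfin.toFinset.max'_mem hne
    rwa [Set.Finite.mem_toFinset] at this
  obtain ⟨q1, hq1, hq1b⟩ := exists_rat_btwn hrmem.2
  have hq1mem : q1 ∈ hfin.toFinset := by
    rw [Set.Finite.mem_toFinset]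
    exact ⟨lt_trans hrmem.1 hq1, hq1b⟩
  have hle : q1 ≤ r := hfin.toFinset.le_max' q1 hq1mem
  have : (q1 : ℝ) ≤ (r : ℝ) := by exact_mod_cast hle
  linarith

/-- A sequence each of whose members avoids the span of the previous ones is
linearly independent. -/
lemma linearIndependent_of_flag (g : ℕ → ℝ)
    (hg : ∀ n, g n ∉ Submodule.span ℚ (g '' Set.Iio n)) :
    LinearIndependent ℚ g := by
  rw [linearIndependent_iff']
  intro s
  induction s using Finset.strongInduction with
  | _ s ih =>
    intro c hsum i his
    have hsne : s.Nonempty := ⟨i, his⟩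
    set n := s.max' hsne with hn
    have hns : n ∈ s := s.max'_mem hsne
    have hsplit : c n • g n + ∑ j ∈ s.erase n, c j • g j = 0 := by
      rw [Finset.add_sum_erase s (fun j => c j • g j) hns]; exact hsum
    by_cases hcn : c n = 0
    · have hsum' : ∑ j ∈ s.erase n, c j • g j = 0 := by
        rw [hcn, zero_smul, zero_add] at hsplit; exact hsplit
      by_cases hin : i = n
      · rw [hin]; exact hcn
      · exact ih (s.erase n) (Finset.erase_ssubset hns) c hsum' i (Finset.mem_erase.mpr ⟨hin, his⟩)
    · exfalso
      apply hg n
      have h1 : c n • g n = - ∑ j ∈ s.erase n, c j • g j :=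
        eq_neg_of_add_eq_zero_left hsplit
      have h2 : g n = (c n)⁻¹ • (- ∑ j ∈ s.erase n, c j • g j) := by
        rw [← h1, smul_smul, inv_mul_cancel₀ hcn, one_smul]
      rw [h2]
      refine Submodule.smul_mem _ _ (Submodule.neg_mem _ (Submodule.sum_mem _ ?_))
      intro j hj
      refine Submodule.smul_mem _ _ (Submodule.subset_span ⟨j, ?_, rfl⟩)
      have hj' := Finset.mem_erase.mp hj
      have hjle : j ≤ n := s.le_max' j hj'.2
      exact lt_of_le_of_ne hjle hj'.1

/-- Core coefficient lemma: if `y` lies in the span of an independent family `g`,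
the `k`-th coordinate of `y` vanishes, and `y = g k + u - v` with `u, v` each
either `0` or a member of the family, then `y = u`. -/
lemma core {g : ℕ → ℝ} (hg : LinearIndependent ℚ g) {y : ℝ}
    (hy : y ∈ Submodule.span ℚ (Set.range g)) {k : ℕ}
    (hk : hg.repr ⟨y, hy⟩ k = 0)
    {u v : ℝ} (hu : u = 0 ∨ ∃ i, u = g i) (hv : v = 0 ∨ ∃ j, v = g j)
    (heq : y = g k + u - v) : y = u := by
  have hrepr : ∀ (w : ℕ →₀ ℚ), Finsupp.linearCombination ℚ g w = y →
      hg.repr ⟨y, hy⟩ = w := fun w hw => hg.repr_eq hw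
  rcases hu with hu0 | ⟨i, hui⟩
  · rcases hv with hv0 | ⟨j, hvj⟩
    · -- y = g k : contradiction with coefficient 0
      exfalso
      have hw : Finsupp.linearCombination ℚ g (Finsupp.single k 1) = y := by
        rw [Finsupp.linearCombination_single, one_smul, heq, hu0, hv0]; ring
      have := hrepr _ hw
      rw [this, Finsupp.single_apply] at hk
      simp at hk
    · -- y = g k - g j
      have hw : Finsupp.linearCombination ℚ g (Finsupp.single k 1 - Finsupp.single j 1) = y := by
        rw [map_sub, Finsupp.linearCombination_single, Finsupp.linearCombination_single,
          one_smul, one_smul, heq, hu0, hvj]; ring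
      have hr := hrepr _ hw
      rw [hr, Finsupp.sub_apply, Finsupp.single_apply, Finsupp.single_apply] at hk
      by_cases hjk : j = k
      · rw [heq, hu0, hvj, hjk]; ring
      · exfalso; rw [if_pos rfl, if_neg hjk] at hk; norm_num at hk
  · rcases hv with hv0 | ⟨j, hvj⟩
    · -- y = g k + g i : impossible
      exfalso
      have hw : Finsupp.linearCombination ℚ g (Finsupp.single k 1 + Finsupp.single i 1) = y := by
        rw [map_add, Finsupp.linearCombination_single, Finsupp.linearCombination_single,
          one_smul, one_smul, heq, hui, hv0]; ring
      have hr := hrepr _ hw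
      rw [hr, Finsupp.add_apply, Finsupp.single_apply, Finsupp.single_apply] at hk
      rw [if_pos rfl] at hk
      by_cases hik : i = k
      · rw [if_pos hik] at hk; norm_num at hk
      · rw [if_neg hik] at hk; norm_num at hk
    · -- y = g k + g i - g j
      have hw : Finsupp.linearCombination ℚ g
          (Finsupp.single k 1 + Finsupp.single i 1 - Finsupp.single j 1) = y := by
        rw [map_sub, map_add, Finsupp.linearCombination_single, Finsupp.linearCombination_single,
          Finsupp.linearCombination_single, one_smul, one_smul, one_smul, heq, hui, hvj]
      have hr := hrepr _ hw
      rw [hr, Finsupp.sub_apply, Finsupp.add_apply, Finsupp.single_apply, Finsupp.single_apply,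
        Finsupp.single_apply, if_pos rfl] at hk
      by_cases hjk : j = k
      · by_cases hik : i = k
        · exfalso; rw [if_pos hik, if_pos hjk] at hk; norm_num at hk
        · rw [heq, hui, hvj, hjk]; ring
      · exfalso
        rw [if_neg hjk] at hk
        by_cases hik : i = k
        · rw [if_pos hik] at hk; norm_num at hk
        · rw [if_neg hik] at hk; norm_num at hk

/-! ### Construction of the auxiliary sequence -/

/-- Pick an element of `Ioo lo hi \ s`, if possible. -/
def pickz (s : Set ℝ) (lo hi : ℝ) : ℝ :=
  if h : (Ioo lo hi \ s).Nonempty then h.choose else 0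

lemma pickz_spec {s : Set ℝ} {lo hi : ℝ} (hlh : lo < hi) (hs : s.Countable) :
    pickz s lo hi ∈ Ioo lo hi \ s := by
  have h := Ioo_diff_nonempty hlh hs
  rw [pickz, dif_pos h]
  exact h.choose_spec

/-- Enumeration of pairs of rationals. -/
def qpair : (ℚ × ℚ) ≃ ℕ := Denumerable.eqv (ℚ × ℚ)

def tpair (n : ℕ) : ℚ × ℚ := qpair.symm n

lemma tpair_encode (p : ℚ × ℚ) : tpair (qpair p) = p := by
  rw [tpair]; exact qpair.symm_apply_apply p

/-- The span of the initial segment of a sequence. -/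
def spanPrev (f : ℕ → ℝ) (n : ℕ) : Set ℝ := (Submodule.span ℚ (f '' Iio n) : Set ℝ)

lemma spanPrev_countable (f : ℕ → ℝ) (n : ℕ) : (spanPrev f n).Countable :=
  countable_span ((Set.countable_range f).mono (Set.image_subset_range f _))

/-- One step of the recursive construction. -/
def stepg (c₀ c₁ : ℝ) (n : ℕ) (f : ℕ → ℝ) : ℝ :=
  if n = 0 then c₁ - c₀
  else if n = 1 then pickz (spanPrev f 1) 0 (c₁ - c₀)
  else
    if 0 < (tpair (n - 2)).1 ∧ (tpair (n - 2)).1 < (tpair (n - 2)).2 ∧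
        ((tpair (n - 2)).2 : ℝ) < f 1 then
      pickz (spanPrev f n) ((tpair (n - 2)).1 : ℝ) ((tpair (n - 2)).2 : ℝ)
    else pickz (spanPrev f n) 0 (f 1)

/-- Course-of-values iteration. -/
def Fg (c₀ c₁ : ℝ) : ℕ → ℕ → ℝ
  | 0 => fun _ => 0
  | n + 1 => fun k => if k = n then stepg c₀ c₁ n (Fg c₀ c₁ n) else Fg c₀ c₁ n k

/-- The sequence. -/
def gseq (c₀ c₁ : ℝ) (n : ℕ) : ℝ := Fg c₀ c₁ (n + 1) n

lemma gseq_eq (c₀ c₁ : ℝ) (n : ℕ) : gseq c₀ c₁ n = stepg c₀ c₁ n (Fg c₀ c₁ n) := by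
  show Fg c₀ c₁ (n + 1) n = _
  rw [Fg]
  exact if_pos rfl

lemma Fg_eq (c₀ c₁ : ℝ) (n k : ℕ) (hk : k < n) : Fg c₀ c₁ n k = gseq c₀ c₁ k := by
  induction n with
  | zero => omega
  | succ n ih =>
    by_cases hkn : k = n
    · subst hkn
      rw [gseq_eq, Fg]
      exact if_pos rfl
    · have : k < n := by omega
      simp only [Fg, if_neg hkn]
      exact ih this

lemma Fg_image (c₀ c₁ : ℝ) (n : ℕ) : Fg c₀ c₁ n '' Iio n = gseq c₀ c₁ '' Iio n :=
  Set.image_congr fun k hk => Fg_eq c₀ c₁ n k hk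

lemma gseq_zero (c₀ c₁ : ℝ) : gseq c₀ c₁ 0 = c₁ - c₀ := by
  rw [gseq_eq, stepg]; simp

lemma gseq_one (c₀ c₁ : ℝ) (h : c₀ < c₁) :
    gseq c₀ c₁ 1 ∈ Ioo 0 (c₁ - c₀) ∧ gseq c₀ c₁ 1 ∉ Submodule.span ℚ (gseq c₀ c₁ '' Iio 1) := by
  have hc : (spanPrev (Fg c₀ c₁ 1) 1).Countable := spanPrev_countable _ _
  have hs := pickz_spec (s := spanPrev (Fg c₀ c₁ 1) 1) (by linarith : (0:ℝ) < c₁ - c₀) hc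
  have he : gseq c₀ c₁ 1 = pickz (spanPrev (Fg c₀ c₁ 1) 1) 0 (c₁ - c₀) := by
    rw [gseq_eq, stepg]; simp
  rw [← he] at hs
  refine ⟨hs.1, ?_⟩
  have h2 := hs.2
  rwa [spanPrev, Fg_image] at h2

lemma gseq_spec (c₀ c₁ : ℝ) (h : c₀ < c₁) (n : ℕ) (hn : 2 ≤ n) :
    gseq c₀ c₁ n ∈ Ioo 0 (gseq c₀ c₁ 1) ∧
      gseq c₀ c₁ n ∉ Submodule.span ℚ (gseq c₀ c₁ '' Iio n) := by
  have h1 := gseq_one c₀ c₁ h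
  have hm0 : 0 < gseq c₀ c₁ 1 := h1.1.1
  have hF1 : Fg c₀ c₁ n 1 = gseq c₀ c₁ 1 := Fg_eq c₀ c₁ n 1 (by omega)
  have hc : (spanPrev (Fg c₀ c₁ n) n).Countable := spanPrev_countable _ _
  have hn0 : ¬ n = 0 := by omega
  have hn1 : ¬ n = 1 := by omega
  have he : gseq c₀ c₁ n = stepg c₀ c₁ n (Fg c₀ c₁ n) := gseq_eq c₀ c₁ n
  rw [stepg, if_neg hn0, if_neg hn1] at he
  by_cases hcond : 0 < (tpair (n - 2)).1 ∧ (tpair (n - 2)).1 < (tpair (n - 2)).2 ∧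
      ((tpair (n - 2)).2 : ℝ) < Fg c₀ c₁ n 1
  · rw [if_pos hcond] at he
    have hlt : ((tpair (n - 2)).1 : ℝ) < ((tpair (n - 2)).2 : ℝ) := by
      exact_mod_cast hcond.2.1
    have hs := pickz_spec (s := spanPrev (Fg c₀ c₁ n) n) hlt hc
    rw [← he] at hs
    have hpos : (0 : ℝ) < ((tpair (n - 2)).1 : ℝ) := by exact_mod_cast hcond.1
    have hub : ((tpair (n - 2)).2 : ℝ) < gseq c₀ c₁ 1 := by rw [← hF1]; exact hcond.2.2
    refine ⟨⟨by linarith [hs.1.1], by linarith [hs.1.2]⟩, ?_⟩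
    have := hs.2
    rwa [spanPrev, Fg_image] at this
  · rw [if_neg hcond] at he
    have hs := pickz_spec (s := spanPrev (Fg c₀ c₁ n) n) (lo := 0) (hi := Fg c₀ c₁ n 1)
      (by rw [hF1]; exact hm0) hc
    rw [← he] at hs
    refine ⟨⟨hs.1.1, by rw [← hF1]; exact hs.1.2⟩, ?_⟩
    have := hs.2
    rwa [spanPrev, Fg_image] at this

lemma gseq_indep (c₀ c₁ : ℝ) (h : c₀ < c₁) : LinearIndependent ℚ (gseq c₀ c₁) := by
  apply linearIndependent_of_flag
  intro n
  match n, (by omega : n = 0 ∨ n = 1 ∨ 2 ≤ n) with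
  | 0, _ =>
    rw [gseq_zero]
    have : (Iio 0 : Set ℕ) = ∅ := by ext k; simp
    rw [this, Set.image_empty, Submodule.span_empty, Submodule.mem_bot]
    intro hz; linarith
  | 1, _ => exact (gseq_one c₀ c₁ h).2
  | (n + 2), _ => exact (gseq_spec c₀ c₁ h (n + 2) (by omega)).2

lemma gseq_dens (c₀ c₁ : ℝ) (h : c₀ < c₁) (u v : ℝ) (hu : 0 ≤ u) (hv : v ≤ gseq c₀ c₁ 1)
    (huv : u < v) : {k : ℕ | 2 ≤ k ∧ gseq c₀ c₁ k ∈ Ioo u v}.Infinite := by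
  obtain ⟨r2, hr2a, hr2b⟩ := exists_rat_btwn (show (u + v) / 2 < v by linarith)
  have hT : {q : ℚ | u < (q : ℝ) ∧ (q : ℝ) < (u + v) / 2}.Infinite :=
    ratsInfinite (by linarith)
  set ψ : ℚ → ℕ := fun r => qpair ((r, r2) : ℚ × ℚ) + 2 with hψ
  have hinj : Function.Injective ψ := by
    intro r r' hrr
    simp only [hψ] at hrr
    have h1 : qpair ((r, r2) : ℚ × ℚ) = qpair ((r', r2) : ℚ × ℚ) := by omega
    have := qpair.injective h1
    exact (Prod.mk.injEq _ _ _ _).mp this |>.1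
  have hsub : ψ '' {q : ℚ | u < (q : ℝ) ∧ (q : ℝ) < (u + v) / 2} ⊆
      {k : ℕ | 2 ≤ k ∧ gseq c₀ c₁ k ∈ Ioo u v} := by
    rintro k ⟨r, ⟨hra, hrb⟩, rfl⟩
    have hk2 : ψ r - 2 = qpair ((r, r2) : ℚ × ℚ) := by simp only [hψ]; omega
    have htp : tpair (ψ r - 2) = (r, r2) := by rw [hk2]; exact tpair_encode _
    refine ⟨by simp only [hψ]; omega, ?_⟩
    -- evaluate gseq at ψ r
    have hF1 : Fg c₀ c₁ (ψ r) 1 = gseq c₀ c₁ 1 := Fg_eq c₀ c₁ _ 1 (by simp only [hψ]; omega)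
    have hn0 : ¬ ψ r = 0 := by simp only [hψ]; omega
    have hn1 : ¬ ψ r = 1 := by simp only [hψ]; omega
    have he : gseq c₀ c₁ (ψ r) = stepg c₀ c₁ (ψ r) (Fg c₀ c₁ (ψ r)) := gseq_eq c₀ c₁ _
    rw [stepg, if_neg hn0, if_neg hn1, htp] at he
    have hcond : 0 < (r, r2).1 ∧ (r, r2).1 < (r, r2).2 ∧ ((r, r2).2 : ℝ) < Fg c₀ c₁ (ψ r) 1 := by
      refine ⟨?_, ?_, ?_⟩
      · have : (0 : ℝ) < (r : ℝ) := lt_of_le_of_lt hu hra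
        exact_mod_cast this
      · have : (r : ℝ) < (r2 : ℝ) := by linarith
        exact_mod_cast this
      · rw [hF1]; simp only []; linarith
    rw [if_pos hcond] at he
    have hlt : ((r, r2).1 : ℚ) < (r, r2).2 := hcond.2.1
    have hltR : ((r : ℚ) : ℝ) < ((r2 : ℚ) : ℝ) := by exact_mod_cast hlt
    have hs := pickz_spec (s := spanPrev (Fg c₀ c₁ (ψ r)) (ψ r)) hltR (spanPrev_countable _ _)
    rw [← he] at hs
    exact ⟨by linarith [hs.1.1], by linarith [hs.1.2]⟩
  exact Set.Infinite.mono hsub (Set.Infinite.image hinj.injOn hT)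

/-! ### The main construction -/

structure VNData (c₀ c₁ : ℝ) (I : Set ℝ) : Type where
  hlt : c₀ < c₁
  hI₁ : Ioo c₀ c₁ ⊆ I
  hI₂ : I ⊆ Icc c₀ c₁
  g : ℕ → ℝ
  indep : LinearIndependent ℚ g
  g0 : g 0 = c₁ - c₀
  m_pos : 0 < g 1
  m_lt : g 1 < c₁ - c₀
  gmem : ∀ k, 2 ≤ k → g k ∈ Ioo 0 (g 1)
  dens : ∀ u v : ℝ, 0 ≤ u → v ≤ g 1 → u < v → {k : ℕ | 2 ≤ k ∧ g k ∈ Ioo u v}.Infinite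

namespace VNData

variable {c₀ c₁ : ℝ} {I : Set ℝ} (D : VNData c₀ c₁ I)

/-- The countable set `B`. -/
def B : Set ℝ := insert 0 {x | ∃ k, 1 ≤ k ∧ D.g k = x}

/-- The subgroup (ℚ-subspace) used to define the cosets. -/
def V : Submodule ℚ ℝ := Submodule.span ℚ (Set.range fun k => D.g (k + 1))

/-- The coset of a real number. -/
def cls (x : ℝ) : ℝ ⧸ D.V := Submodule.Quotient.mk x

/-- The part of `I` in a given coset. -/
def X (q : ℝ ⧸ D.V) : Set ℝ := {x | x ∈ I ∧ D.cls x = q}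

/-- Two potential members of `A` conflict if their difference is a difference of
members of `B`. -/
def Conf (a a' : ℝ) : Prop := ∃ u ∈ D.B, ∃ v ∈ D.B, a - a' = u - v

/-- `b` is a good choice for covering `x`, given already-chosen elements `A`. -/
def Good (q : ℝ ⧸ D.V) (A : Finset ℝ) (x b : ℝ) : Prop :=
  x ∈ D.X q ∧ b ∈ D.B ∧ (∀ b' ∈ D.B, x - b + b' ∈ I) ∧ ∀ a ∈ A, ¬ D.Conf (x - b) a

lemma zero_mem_B : (0 : ℝ) ∈ D.B := Set.mem_insert _ _

lemma m_mem_B : D.g 1 ∈ D.B := Set.mem_insert_iff.mpr (Or.inr ⟨1, le_refl 1, rfl⟩)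

lemma B_form {b : ℝ} (hb : b ∈ D.B) : b = 0 ∨ ∃ i, b = D.g i := by
  rcases hb with hb | ⟨k, _, hk⟩
  · exact Or.inl hb
  · exact Or.inr ⟨k, hk.symm⟩

lemma B_range {b : ℝ} (hb : b ∈ D.B) : b = 0 ∨ (0 < b ∧ b ≤ D.g 1) := by
  rcases hb with hb | ⟨k, hk1, hk⟩
  · exact Or.inl hb
  · right
    rcases (by omega : k = 1 ∨ 2 ≤ k) with hk2 | hk2
    · rw [← hk, hk2]
      exact ⟨D.m_pos, le_refl _⟩
    · have := D.gmem k hk2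
      rw [← hk]
      exact ⟨this.1, le_of_lt this.2⟩

lemma B_Icc {b : ℝ} (hb : b ∈ D.B) : 0 ≤ b ∧ b ≤ D.g 1 := by
  rcases D.B_range hb with hb0 | ⟨h1, h2⟩
  · rw [hb0]; exact ⟨le_refl _, le_of_lt D.m_pos⟩
  · exact ⟨le_of_lt h1, h2⟩

lemma B_subset_V {b : ℝ} (hb : b ∈ D.B) : b ∈ D.V := by
  rcases hb with hb | ⟨k, hk1, hk⟩
  · rw [hb]; exact Submodule.zero_mem _
  · rw [← hk]
    apply Submodule.subset_span
    exact ⟨k - 1, by show D.g (k - 1 + 1) = D.g k; congr 1; omega⟩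

lemma B_countable : D.B.Countable := by
  apply Set.Countable.insert
  have : {x | ∃ k, 1 ≤ k ∧ D.g k = x} ⊆ Set.range D.g := by
    rintro x ⟨k, _, hk⟩; exact ⟨k, hk⟩
  exact (Set.countable_range D.g).mono this

lemma B_infinite : D.B.Infinite := by
  have hsub : (fun k => D.g (k + 1)) '' Set.univ ⊆ D.B := by
    rintro x ⟨k, _, rfl⟩
    exact Set.mem_insert_iff.mpr (Or.inr ⟨k + 1, by omega, rfl⟩)
  apply Set.Infinite.mono hsub
  apply Set.Infinite.image
  · intro a _ b _ hab
    have := D.indep.injective hab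
    omega
  · exact Set.infinite_univ

lemma V_countable : (D.V : Set ℝ).Countable :=
  countable_span (Set.countable_range _)

lemma L_notMem_V : c₁ - c₀ ∉ D.V := by
  rw [← D.g0]
  intro hmem
  have hnm : (0 : ℕ) ∉ {i : ℕ | 0 < i} := by simp
  apply D.indep.notMem_span_image hnm
  refine Submodule.span_mono ?_ hmem
  rintro x ⟨k, rfl⟩
  exact ⟨k + 1, by simp, rfl⟩

lemma V_le_span : D.V ≤ Submodule.span ℚ (Set.range D.g) := by
  apply Submodule.span_mono
  rintro x ⟨k, rfl⟩
  exact ⟨k + 1, rfl⟩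

lemma cls_eq_iff {x y : ℝ} : D.cls x = D.cls y ↔ x - y ∈ D.V :=
  Submodule.Quotient.eq D.V

lemma conf_symm {a a' : ℝ} (h : D.Conf a a') : D.Conf a' a := by
  obtain ⟨u, hu, v, hv, huv⟩ := h
  exact ⟨v, hv, u, hu, by linarith⟩

lemma not_both_endpoints {q : ℝ ⧸ D.V} (h0 : c₀ ∈ D.X q) (h1 : c₁ ∈ D.X q) : False := by
  have : D.cls c₁ = D.cls c₀ := by rw [h1.2, h0.2]
  rw [D.cls_eq_iff] at this
  exact D.L_notMem_V this

/-- The bad index set coming from a previously chosen element. -/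
def badOf (x a : ℝ) : Finset ℕ :=
  if h : x - a ∈ Submodule.span ℚ (Set.range D.g) then (D.indep.repr ⟨x - a, h⟩).support
  else ∅

/-- Key lemma: an uncovered point of `I` admits a good choice of `b`. -/
lemma key (q : ℝ ⧸ D.V) (A : Finset ℝ) (x : ℝ) (hx : x ∈ D.X q)
    (hA : ∀ a ∈ A, D.cls a = q)
    (huncov : ¬ ∃ a ∈ A, ∃ b ∈ D.B, x = a + b)
    (hAe : A = ∅ ∨ (c₀ < x ∧ x < c₁)) :
    ∃ b, D.Good q A x b := by
  obtain ⟨hxI, hxq⟩ := hx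
  have hm0 : 0 < D.g 1 := D.m_pos
  have hmL : D.g 1 < c₁ - c₀ := D.m_lt
  have hIcc := D.hI₂ hxI
  -- the interior case
  by_cases hint : c₀ < x ∧ x < c₁
  · obtain ⟨hx0, hx1⟩ := hint
    set u : ℝ := max (x - c₁ + D.g 1) 0 with hu
    set v : ℝ := min (x - c₀) (D.g 1) with hv
    have huv : u < v := by
      apply max_lt
      · apply lt_min <;> linarith
      · apply lt_min <;> linarith
    have hK := D.dens u v (le_max_right _ _) (min_le_right _ _) huv
    have hbadfin : ((A.biUnion (fun a => D.badOf x a) : Finset ℕ) : Set ℕ).Finite :=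
      (A.biUnion (fun a => D.badOf x a)).finite_toSet
    obtain ⟨k, hkK, hkbad⟩ := (hK.diff hbadfin).nonempty
    obtain ⟨hk2, hkIoo⟩ := hkK
    have hglo : x - c₁ + D.g 1 < D.g k := lt_of_le_of_lt (le_max_left _ _) hkIoo.1
    have hghi : D.g k < x - c₀ := lt_of_lt_of_le hkIoo.2 (min_le_left _ _)
    refine ⟨D.g k, ⟨hxI, hxq⟩, ?_, ?_, ?_⟩
    · exact Set.mem_insert_iff.mpr (Or.inr ⟨k, by omega, rfl⟩)
    · intro b' hb'
      obtain ⟨hb'0, hb'1⟩ := D.B_Icc hb'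
      apply D.hI₁
      constructor <;> linarith
    · intro a haA hconf
      obtain ⟨u', hu', v', hv', heq⟩ := hconf
      have hyV : x - a ∈ D.V := by
        rw [← D.cls_eq_iff, hxq, hA a haA]
      have hyspan : x - a ∈ Submodule.span ℚ (Set.range D.g) := D.V_le_span hyV
      have hknot : k ∉ (D.indep.repr ⟨x - a, hyspan⟩).support := by
        intro hkmem
        apply hkbad
        rw [Finset.coe_biUnion]
        refine Set.mem_biUnion haA ?_
        rw [badOf, dif_pos hyspan]
        exact hkmem
      have h0 : (D.indep.repr ⟨x - a, hyspan⟩) k = 0 := Finsupp.notMem_support_iff.mp hknot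
      have hy_eq : x - a = D.g k + u' - v' := by
        have : x - D.g k - a = u' - v' := heq
        linarith
      have hyu := core D.indep hyspan h0 (D.B_form hu') (D.B_form hv') hy_eq
      exact huncov ⟨a, haA, u', hu', by linarith⟩
  -- endpoint cases : A is empty
  · have hAemp : A = ∅ := by
      rcases hAe with h | h
      · exact h
      · exact absurd h hint
    subst hAemp
    have hende : x = c₀ ∨ x = c₁ := by
      rcases hIcc with ⟨hle1, hle2⟩
      rcases eq_or_lt_of_le hle1 with he | hlt1
      · exact Or.inl he.symm
      · rcases eq_or_lt_of_le hle2 with he | hlt2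
        · exact Or.inr he
        · exact absurd ⟨hlt1, hlt2⟩ hint
    rcases hende with he | he
    · -- x = c₀, take b = 0
      refine ⟨0, ⟨hxI, hxq⟩, D.zero_mem_B, ?_, by simp⟩
      intro b' hb'
      rcases D.B_range hb' with rfl | ⟨hp, hle⟩
      · simpa using hxI
      · apply D.hI₁
        constructor
        · linarith
        · linarith
    · -- x = c₁, take b = D.g 1
      refine ⟨D.g 1, ⟨hxI, hxq⟩, D.m_mem_B, ?_, by simp⟩
      intro b' hb'
      rcases D.B_range hb' with rfl | ⟨hp, hle⟩
      · have : x - D.g 1 + 0 ∈ Ioo c₀ c₁ := by constructor <;> linarith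
        exact D.hI₁ this
      · rcases eq_or_lt_of_le hle with he2 | hlt
        · have hxx : x - D.g 1 + b' = x := by rw [he2]; ring
          rw [hxx]; exact hxI
        · apply D.hI₁
          constructor
          · linarith
          · linarith

lemma X_countable (q : ℝ ⧸ D.V) : (D.X q).Countable := by
  rcases Set.eq_empty_or_nonempty (D.X q) with he | ⟨x₀, hx₀⟩
  · rw [he]; exact Set.countable_empty
  · have hsub : D.X q ⊆ (fun z => x₀ + z) '' (D.V : Set ℝ) := by
      intro x hx
      refine ⟨x - x₀, ?_, by ring⟩
      have hcc : D.cls x = D.cls x₀ := by rw [hx.2, hx₀.2]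
      exact D.cls_eq_iff.mp hcc
    exact Set.Countable.mono hsub (D.V_countable.image _)

lemma exists_enum (q : ℝ ⧸ D.V) (hq : (D.X q).Nonempty) :
    ∃ f : ℕ → ℝ, (∀ n, f n ∈ D.X q) ∧ (∀ x ∈ D.X q, ∃ n, f n = x) ∧
      (c₀ ∈ D.X q → f 0 = c₀) ∧ (c₁ ∈ D.X q → f 0 = c₁) := by
  obtain ⟨f0, hf0⟩ := (D.X_countable q).exists_eq_range hq
  have hmem : ∀ n, f0 n ∈ D.X q := fun n => by rw [hf0]; exact ⟨n, rfl⟩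
  have hsurj : ∀ x ∈ D.X q, ∃ n, f0 n = x := by
    intro x hx; rw [hf0] at hx; obtain ⟨n, hn⟩ := hx; exact ⟨n, hn⟩
  by_cases h0 : c₀ ∈ D.X q
  · refine ⟨fun n => Nat.casesOn n c₀ (fun k => f0 k), ?_, ?_, fun _ => rfl, ?_⟩
    · intro n; cases n with
      | zero => exact h0
      | succ k => exact hmem k
    · intro x hx
      obtain ⟨n, hn⟩ := hsurj x hx
      exact ⟨n + 1, hn⟩
    · intro h1; exact absurd h1 (fun h1 => D.not_both_endpoints h0 h1)
  · by_cases h1 : c₁ ∈ D.X q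
    · refine ⟨fun n => Nat.casesOn n c₁ (fun k => f0 k), ?_, ?_, fun h0' => absurd h0' h0, fun _ => rfl⟩
      · intro n; cases n with
        | zero => exact h1
        | succ k => exact hmem k
      · intro x hx
        obtain ⟨n, hn⟩ := hsurj x hx
        exact ⟨n + 1, hn⟩
    · exact ⟨f0, hmem, hsurj, fun h0' => absurd h0' h0, fun h1' => absurd h1' h1⟩

/-- Enumeration of the points of `I` in a coset. -/
def enum (q : ℝ ⧸ D.V) (n : ℕ) : ℝ :=
  if hq : (D.X q).Nonempty then (D.exists_enum q hq).choose n else 0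

lemma enum_mem {q : ℝ ⧸ D.V} (hq : (D.X q).Nonempty) (n : ℕ) : D.enum q n ∈ D.X q := by
  rw [enum, dif_pos hq]; exact (D.exists_enum q hq).choose_spec.1 n

lemma enum_surj {q : ℝ ⧸ D.V} (hq : (D.X q).Nonempty) {x : ℝ} (hx : x ∈ D.X q) :
    ∃ n, D.enum q n = x := by
  obtain ⟨n, hn⟩ := (D.exists_enum q hq).choose_spec.2.1 x hx
  exact ⟨n, by rw [enum, dif_pos hq]; exact hn⟩

lemma enum_c₀ {q : ℝ ⧸ D.V} (hq : (D.X q).Nonempty) (h0 : c₀ ∈ D.X q) : D.enum q 0 = c₀ := by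
  rw [enum, dif_pos hq]; exact (D.exists_enum q hq).choose_spec.2.2.1 h0

lemma enum_c₁ {q : ℝ ⧸ D.V} (hq : (D.X q).Nonempty) (h1 : c₁ ∈ D.X q) : D.enum q 0 = c₁ := by
  rw [enum, dif_pos hq]; exact (D.exists_enum q hq).choose_spec.2.2.2 h1

/-- One step of the greedy covering construction. -/
def step (q : ℝ ⧸ D.V) (A : Finset ℝ) (x : ℝ) : Finset ℝ :=
  if h : ∃ b, D.Good q A x b then insert (x - h.choose) A else A

lemma step_eq_pos {q : ℝ ⧸ D.V} {A : Finset ℝ} {x : ℝ} (h : ∃ b, D.Good q A x b) :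
    D.step q A x = insert (x - h.choose) A := by rw [step, dif_pos h]

lemma step_eq_neg {q : ℝ ⧸ D.V} {A : Finset ℝ} {x : ℝ} (h : ¬ ∃ b, D.Good q A x b) :
    D.step q A x = A := by rw [step, dif_neg h]

lemma subset_step (q : ℝ ⧸ D.V) (A : Finset ℝ) (x : ℝ) : A ⊆ D.step q A x := by
  rw [step]; split_ifs with h
  · exact Finset.subset_insert _ _
  · exact Finset.Subset.refl _

lemma step_covers {q : ℝ ⧸ D.V} {A : Finset ℝ} {x : ℝ} (h : ∃ b, D.Good q A x b) :
    ∃ a ∈ D.step q A x, ∃ b ∈ D.B, x = a + b := by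
  rw [D.step_eq_pos h]
  exact ⟨x - h.choose, Finset.mem_insert_self _ _, h.choose, h.choose_spec.2.1, by ring⟩

/-- The chain of finite approximations to `A ∩ (coset q)`. -/
def chain (q : ℝ ⧸ D.V) : ℕ → Finset ℝ
  | 0 => ∅
  | n + 1 => D.step q (chain q n) (D.enum q n)

lemma chain_zero (q : ℝ ⧸ D.V) : D.chain q 0 = ∅ := rfl

lemma chain_succ (q : ℝ ⧸ D.V) (n : ℕ) :
    D.chain q (n + 1) = D.step q (D.chain q n) (D.enum q n) := rfl

lemma chain_mono (q : ℝ ⧸ D.V) {m n : ℕ} (h : m ≤ n) : D.chain q m ⊆ D.chain q n := by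
  induction n with
  | zero =>
    have hm : m = 0 := by omega
    subst hm
    exact Finset.Subset.refl _
  | succ n ih =>
    rcases (by omega : m ≤ n ∨ m = n + 1) with h' | h'
    · refine (ih h').trans ?_
      rw [D.chain_succ q n]
      exact D.subset_step q _ _
    · subst h'
      exact Finset.Subset.refl _

lemma inv_safe (q : ℝ ⧸ D.V) (n : ℕ) :
    ∀ a ∈ D.chain q n, (∀ b ∈ D.B, a + b ∈ I) ∧ D.cls a = q := by
  induction n with
  | zero => intro a ha; exact absurd ha (Finset.notMem_empty a)
  | succ n ih =>
    intro a ha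
    rw [D.chain_succ q n] at ha
    by_cases h : ∃ b, D.Good q (D.chain q n) (D.enum q n) b
    · rw [D.step_eq_pos h] at ha
      rcases Finset.mem_insert.mp ha with rfl | ha'
      · obtain ⟨hxX, hbB, hsafe, _⟩ := h.choose_spec
        constructor
        · intro b' hb'; exact hsafe b' hb'
        · have hbV := D.B_subset_V hbB
          have : D.cls (D.enum q n - h.choose) = D.cls (D.enum q n) := by
            rw [D.cls_eq_iff]
            have he : D.enum q n - h.choose - D.enum q n = -h.choose := by ring
            rw [he]
            exact Submodule.neg_mem _ hbV
          rw [this, hxX.2]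
      · exact ih a ha'
    · rw [D.step_eq_neg h] at ha
      exact ih a ha

lemma inv_sep (q : ℝ ⧸ D.V) (n : ℕ) :
    ∀ a ∈ D.chain q n, ∀ a' ∈ D.chain q n, a ≠ a' → ¬ D.Conf a a' := by
  induction n with
  | zero => intro a ha; exact absurd ha (Finset.notMem_empty a)
  | succ n ih =>
    intro a ha a' ha' hne
    rw [D.chain_succ q n] at ha ha'
    by_cases h : ∃ b, D.Good q (D.chain q n) (D.enum q n) b
    · rw [D.step_eq_pos h] at ha ha'
      obtain ⟨hxX, hbB, hsafe, hnoconf⟩ := h.choose_spec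
      rcases Finset.mem_insert.mp ha with rfl | ha2
      · rcases Finset.mem_insert.mp ha' with he | ha'2
        · exact absurd he.symm hne
        · exact hnoconf a' ha'2
      · rcases Finset.mem_insert.mp ha' with rfl | ha'2
        · intro hcf; exact hnoconf a ha2 (D.conf_symm hcf)
        · exact ih a ha2 a' ha'2 hne
    · rw [D.step_eq_neg h] at ha ha'
      exact ih a ha a' ha' hne

lemma inv_cov (q : ℝ ⧸ D.V) (hq : (D.X q).Nonempty) (n : ℕ) :
    ∀ k < n, ∃ a ∈ D.chain q n, ∃ b ∈ D.B, D.enum q k = a + b := by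
  induction n with
  | zero => intro k hk; omega
  | succ n ih =>
    intro k hk
    rcases (by omega : k < n ∨ k = n) with hk' | rfl
    · obtain ⟨a, ha, b, hb, hab⟩ := ih k hk'
      exact ⟨a, D.chain_mono q (Nat.le_succ n) ha, b, hb, hab⟩
    · set x := D.enum q k with hx
      have hxX : x ∈ D.X q := D.enum_mem hq k
      by_cases hcov : ∃ a ∈ D.chain q k, ∃ b ∈ D.B, x = a + b
      · obtain ⟨a, ha, b, hb, hab⟩ := hcov
        exact ⟨a, D.chain_mono q (Nat.le_succ k) ha, b, hb, hab⟩
      · have hAe : D.chain q k = ∅ ∨ (c₀ < x ∧ x < c₁) := by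
          by_cases hend : x = c₀ ∨ x = c₁
          · left
            rcases Nat.eq_zero_or_pos k with rfl | hkpos
            · rfl
            · exfalso
              obtain ⟨a, ha, b, hb, hab⟩ := ih 0 hkpos
              have he0 : D.enum q 0 = x := by
                rcases hend with he | he
                · rw [he] at hxX ⊢; exact D.enum_c₀ hq hxX
                · rw [he] at hxX ⊢; exact D.enum_c₁ hq hxX
              exact hcov ⟨a, ha, b, hb, by rw [← he0]; exact hab⟩
          · right
            push_neg at hend
            have hIcc := D.hI₂ hxX.1
            exact ⟨lt_of_le_of_ne hIcc.1 (Ne.symm hend.1), lt_of_le_of_ne hIcc.2 hend.2⟩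
        have hgood : ∃ b, D.Good q (D.chain q k) x b :=
          D.key q (D.chain q k) x hxX (fun a ha => (D.inv_safe q k a ha).2) hcov hAe
        rw [D.chain_succ q k]
        exact D.step_covers hgood

/-- The uncountable set `A`. -/
def carrier : Set ℝ := ⋃ (q : ℝ ⧸ D.V), ⋃ (n : ℕ), (D.chain q n : Set ℝ)

lemma carrier_spec {a : ℝ} (ha : a ∈ D.carrier) :
    ∃ q n, a ∈ D.chain q n ∧ D.cls a = q := by
  obtain ⟨q, hq⟩ := Set.mem_iUnion.mp ha
  obtain ⟨n, hn⟩ := Set.mem_iUnion.mp hq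
  exact ⟨q, n, hn, (D.inv_safe q n a hn).2⟩

lemma carrier_safe {a : ℝ} (ha : a ∈ D.carrier) : ∀ b ∈ D.B, a + b ∈ I := by
  obtain ⟨q, n, hn, _⟩ := D.carrier_spec ha
  exact (D.inv_safe q n a hn).1

lemma cover {x : ℝ} (hx : x ∈ I) : ∃ a ∈ D.carrier, ∃ b ∈ D.B, x = a + b := by
  set q := D.cls x with hq
  have hqne : (D.X q).Nonempty := ⟨x, hx, rfl⟩
  obtain ⟨n, hn⟩ := D.enum_surj hqne (show x ∈ D.X q from ⟨hx, rfl⟩)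
  obtain ⟨a, ha, b, hb, hab⟩ := D.inv_cov q hqne (n + 1) n (Nat.lt_succ_self n)
  refine ⟨a, ?_, b, hb, by rw [← hn]; exact hab⟩
  exact Set.mem_iUnion.mpr ⟨q, Set.mem_iUnion.mpr ⟨n + 1, ha⟩⟩

lemma uniq {a₁ a₂ b₁ b₂ : ℝ} (ha₁ : a₁ ∈ D.carrier) (ha₂ : a₂ ∈ D.carrier)
    (hb₁ : b₁ ∈ D.B) (hb₂ : b₂ ∈ D.B) (h : a₁ + b₁ = a₂ + b₂) : a₁ = a₂ ∧ b₁ = b₂ := by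
  obtain ⟨q₁, n₁, hn₁, hc₁⟩ := D.carrier_spec ha₁
  obtain ⟨q₂, n₂, hn₂, hc₂⟩ := D.carrier_spec ha₂
  have hqq : q₁ = q₂ := by
    rw [← hc₁, ← hc₂, D.cls_eq_iff]
    have he : a₁ - a₂ = b₂ - b₁ := by linarith
    rw [he]
    exact Submodule.sub_mem _ (D.B_subset_V hb₂) (D.B_subset_V hb₁)
  subst hqq
  have haa : a₁ = a₂ := by
    by_contra hne
    have hsep := D.inv_sep q₁ (max n₁ n₂) a₁ (D.chain_mono q₁ (le_max_left n₁ n₂) hn₁)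
      a₂ (D.chain_mono q₁ (le_max_right n₁ n₂) hn₂) hne
    exact hsep ⟨b₂, hb₂, b₁, hb₁, by linarith⟩
  exact ⟨haa, by rw [haa] at h; linarith⟩

lemma carrier_uncountable : ¬ D.carrier.Countable := by
  intro hc
  have hsub : Ioo c₀ c₁ ⊆ Set.image2 (· + ·) D.carrier D.B := by
    intro x hx
    obtain ⟨a, ha, b, hb, hab⟩ := D.cover (D.hI₁ hx)
    rw [hab]
    exact Set.mem_image2_of_mem ha hb
  obtain ⟨z, hz⟩ := Ioo_diff_nonempty D.hlt (hc.image2 D.B_countable _)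
  exact hz.2 (hsub hz.1)

theorem master (E : VNData c₀ c₁ I) : ∃ A B : Set ℝ, ¬ A.Countable ∧ B.Countable ∧ B.Infinite ∧
    IsDirectSum A B I := by
  refine ⟨E.carrier, E.B, E.carrier_uncountable, E.B_countable, E.B_infinite, ?_, ?_⟩
  · intro a ha b hb
    exact E.carrier_safe ha b hb
  · intro c hc
    obtain ⟨a, ha, b, hb, hab⟩ := E.cover hc
    refine ⟨(a, b), ⟨ha, hb, hab.symm⟩, ?_⟩
    rintro ⟨a', b'⟩ ⟨ha', hb', hab'⟩
    have h := E.uniq ha' ha hb' hb (by rw [hab', ← hab])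
    simp only [Prod.mk.injEq]
    exact h

end VNData

end SteinhausVN

/-- von Neumann's theorem (Steinhaus's problem): every finite interval I (open,
closed, or half-open) is a direct sum A ⊕ B of an uncountable set A and a
countably infinite set B; equivalently I is partitioned into countably
infinitely many pairwise disjoint translates of A. -/
theorem steinhaus_vonNeumann
    (c₀ c₁ : ℝ) (h : c₀ < c₁)
    (I : Set ℝ) (hI₁ : Ioo c₀ c₁ ⊆ I) (hI₂ : I ⊆ Icc c₀ c₁) :
    ∃ A B : Set ℝ, ¬ A.Countable ∧ B.Countable ∧ B.Infinite ∧
      IsDirectSum A B I := by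
  have h1 := SteinhausVN.gseq_one c₀ c₁ h
  have D : SteinhausVN.VNData c₀ c₁ I :=
    { hlt := h
      hI₁ := hI₁
      hI₂ := hI₂
      g := SteinhausVN.gseq c₀ c₁
      indep := SteinhausVN.gseq_indep c₀ c₁ h
      g0 := SteinhausVN.gseq_zero c₀ c₁
      m_pos := h1.1.1
      m_lt := h1.1.2
      gmem := fun k hk => (SteinhausVN.gseq_spec c₀ c₁ h k hk).1
      dens := fun u v hu hv huv => SteinhausVN.gseq_dens c₀ c₁ h u v hu hv huv }
  exact D.master
end
end

section
/- If a finite interval I is the direct sum A ⊕ B of an uncountable set A and a countably infinite set B of real numbers, then A is not Lebesgue measurable. -/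
open Set MeasureTheory

/-- If a finite interval is the direct sum A ⊕ B of an uncountable set A and a
countably infinite set B, then A is not Lebesgue measurable. -/
theorem not_measurable_of_directSum_interval
    (c₀ c₁ : ℝ) (h : c₀ < c₁)
    (I : Set ℝ) (hI₁ : Ioo c₀ c₁ ⊆ I) (hI₂ : I ⊆ Icc c₀ c₁)
    (A B : Set ℝ) (hA : ¬ A.Countable) (hBc : B.Countable) (hBi : B.Infinite)
    (hAB : IsDirectSum A B I) :
    ¬ NullMeasurableSet A (volume : Measure ℝ) := by
  intro hNM
  set S : ℝ → Set ℝ := fun b => (fun x => -b + x) ⁻¹' A with hS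
  have hSmem : ∀ b x, x ∈ S b ↔ ∃ a ∈ A, a + b = x := by
    intro b x
    constructor
    · intro hx; exact ⟨-b + x, hx, by ring⟩
    · rintro ⟨a, ha, rfl⟩; simpa [hS] using ha
  have hSsub : ∀ b ∈ B, S b ⊆ I := by
    intro b hb x hx
    obtain ⟨a, ha, rfl⟩ := (hSmem b x).1 hx
    exact hAB.1 a ha b hb
  have hSvol : ∀ b, volume (S b) = volume A := fun b => measure_preimage_add _ _ _
  have hSnm : ∀ b, NullMeasurableSet (S b) (volume : Measure ℝ) := fun b =>
    hNM.preimage (measurePreserving_add_left volume (-b)).quasiMeasurePreserving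
  have hSdisj : ∀ b₁ ∈ B, ∀ b₂ ∈ B, b₁ ≠ b₂ → Disjoint (S b₁) (S b₂) := by
    intro b₁ hb₁ b₂ hb₂ hne
    rw [Set.disjoint_left]
    intro x hx₁ hx₂
    obtain ⟨a₁, ha₁, he₁⟩ := (hSmem b₁ x).1 hx₁
    obtain ⟨a₂, ha₂, he₂⟩ := (hSmem b₂ x).1 hx₂
    have hxI : x ∈ I := he₁ ▸ hAB.1 a₁ ha₁ b₁ hb₁
    obtain ⟨p, -, hu⟩ := hAB.2 x hxI
    have h1 : (a₁, b₁) = p := hu _ ⟨ha₁, hb₁, he₁⟩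
    have h2 : (a₂, b₂) = p := hu _ ⟨ha₂, hb₂, he₂⟩
    exact hne (congrArg Prod.snd (h1.trans h2.symm))
  have hIpos : 0 < volume I :=
    lt_of_lt_of_le (by simpa [Real.volume_Ioo] using sub_pos.2 h) (measure_mono hI₁)
  have hIfin : volume I < ⊤ :=
    lt_of_le_of_lt (measure_mono hI₂) (by simp [Real.volume_Icc])
  rcases eq_or_ne (volume A) 0 with hA0 | hA0
  · -- I ⊆ ⋃ b ∈ B, S b, all null
    have hIsub : I ⊆ ⋃ b ∈ B, S b := by
      intro x hx
      obtain ⟨⟨a, b⟩, ⟨ha, hb, he⟩, -⟩ := hAB.2 x hx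
      exact Set.mem_biUnion hb ((hSmem b x).2 ⟨a, ha, he⟩)
    have : volume I = 0 := by
      refine measure_mono_null hIsub ?_
      exact (measure_biUnion_null_iff hBc).2 fun b _ => by rw [hSvol]; exact hA0
    exact hIpos.ne' this
  · -- infinitely many disjoint translates of positive measure inside I
    have f := Set.Infinite.natEmbedding B hBi
    have hf : Function.Injective f := f.injective
    have hfB : ∀ n, (f n : ℝ) ∈ B := fun n => (f n).2
    have hunion : (⋃ n : ℕ, S (f n)) ⊆ I := Set.iUnion_subset fun n => hSsub _ (hfB n)
    have hdisj : Pairwise (Function.onFun (AEDisjoint volume) (fun n : ℕ => S (f n))) := by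
      intro m n hmn
      exact Disjoint.aedisjoint (hSdisj _ (hfB m) _ (hfB n)
        (fun hbe => hmn (hf (Subtype.ext hbe))))
    have : volume (⋃ n : ℕ, S (f n)) = ∑' n : ℕ, volume (S (f n)) :=
      measure_iUnion₀ hdisj fun n => hSnm _
    have htop : volume (⋃ n : ℕ, S (f n)) = ⊤ := by
      rw [this]
      simp only [hSvol]
      exact ENNReal.tsum_const_eq_top_of_ne_zero hA0
    exact absurd (htop ▸ measure_mono hunion) (not_le.2 hIfin)
end

section
/- Let B be a set of real numbers linearly independent over ℚ, let x, a ∈ ℝ with x − a ∈ span of B over ℚ, and suppose x ∉ a + B. If for h = 1, 2, 3 there are elements b_{p_h}, b_{q_h}, b_{r_h} ∈ B with x − b_{p_h} + b_{q_h} = a + b_{r_h}, then the elements b_{p_1}, b_{p_2}, b_{p_3} are not all distinct, or two of them coincide with a common element b_{r_1}; in particular b_{p_1}, b_{p_2}, b_{p_3} take at most two distinct values. -/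
open Set

lemma key_indep (B : Set ℝ) (hli : LinearIndependent ℚ ((↑) : B → ℝ))
    (p q r p' q' r' : ℝ) (hp : p ∈ B) (hq : q ∈ B) (hr : r ∈ B)
    (hp' : p' ∈ B) (hq' : q' ∈ B) (hr' : r' ∈ B)
    (hqp' : q' ≠ p')
    (heq : p - q + r = p' - q' + r') (hne : p ≠ p') : r = p' := by
  set l : B →₀ ℚ := Finsupp.single ⟨p, hp⟩ 1 - Finsupp.single ⟨q, hq⟩ 1
      + Finsupp.single ⟨r, hr⟩ 1 - Finsupp.single ⟨p', hp'⟩ 1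
      + Finsupp.single ⟨q', hq'⟩ 1 - Finsupp.single ⟨r', hr'⟩ 1 with hl
  have h0 : Finsupp.linearCombination ℚ ((↑) : B → ℝ) l = 0 := by
    simp only [hl, map_add, map_sub, Finsupp.linearCombination_single, one_smul]
    show p - q + r - p' + q' - r' = 0
    linarith
  have hz := linearIndependent_iff.mp hli l h0
  have hval := DFunLike.congr_fun hz ⟨p', hp'⟩
  simp only [hl, Finsupp.coe_add, Finsupp.coe_sub, Pi.add_apply, Pi.sub_apply,
    Finsupp.single_apply, Finsupp.coe_zero, Pi.zero_apply, Subtype.mk.injEq] at hval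
  by_contra hrne
  split_ifs at hval <;> simp_all <;> norm_num at hval

/-- The ℚ-independence argument in the core lemma: if x ∉ a + B and for
h = 1, 2, 3 we have x − b_{p_h} + b_{q_h} = a + b_{r_h} with all these elements
in the ℚ-independent set B, then two of b_{p_1}, b_{p_2}, b_{p_3} are equal, or
b_{p_2} = b_{p_3} = b_{r_1}; in particular they take at most two distinct values. -/
theorem at_most_two_p_values
    (B : Set ℝ) (hli : LinearIndependent ℚ ((↑) : B → ℝ))
    (x a : ℝ) (hxa : x - a ∈ Submodule.span ℚ B)
    (hx : ∀ b ∈ B, x ≠ a + b)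
    (bp bq br : Fin 3 → ℝ)
    (hbp : ∀ h, bp h ∈ B) (hbq : ∀ h, bq h ∈ B) (hbr : ∀ h, br h ∈ B)
    (heq : ∀ h, x - bp h + bq h = a + br h) :
    ((bp 0 = bp 1 ∨ bp 0 = bp 2 ∨ bp 1 = bp 2) ∨
      (bp 1 = br 0 ∧ bp 2 = br 0)) ∧
    ∃ s : Finset ℝ, s.card ≤ 2 ∧ ∀ h, bp h ∈ s := by
  have hqp : ∀ h, bq h ≠ bp h := by
    intro h hqph
    exact hx (br h) (hbr h) (by have := heq h; rw [hqph] at this; linarith)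
  have hvv : ∀ i j : Fin 3, bp i - bq i + br i = bp j - bq j + br j := by
    intro i j; have hi := heq i; have hj := heq j; linarith
  have main : bp 0 = bp 1 ∨ bp 0 = bp 2 ∨ bp 1 = bp 2 := by
    by_contra hcon
    push_neg at hcon
    obtain ⟨h01, h02, h12⟩ := hcon
    have e1 : br 0 = bp 1 := key_indep B hli (bp 0) (bq 0) (br 0) (bp 1) (bq 1) (br 1)
      (hbp 0) (hbq 0) (hbr 0) (hbp 1) (hbq 1) (hbr 1) (hqp 1) (hvv 0 1) h01
    have e2 : br 0 = bp 2 := key_indep B hli (bp 0) (bq 0) (br 0) (bp 2) (bq 2) (br 2)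
      (hbp 0) (hbq 0) (hbr 0) (hbp 2) (hbq 2) (hbr 2) (hqp 2) (hvv 0 2) h02
    exact h12 (e1 ▸ e2)
  refine ⟨Or.inl main, ?_⟩
  rcases main with h | h | h
  · refine ⟨{bp 0, bp 2}, (Finset.card_insert_le _ _).trans (by simp), ?_⟩
    intro i; fin_cases i <;> simp [← h]
  · refine ⟨{bp 0, bp 1}, (Finset.card_insert_le _ _).trans (by simp), ?_⟩
    intro i; fin_cases i <;> simp [← h]
  · refine ⟨{bp 0, bp 1}, (Finset.card_insert_le _ _).trans (by simp), ?_⟩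
    intro i; fin_cases i <;> simp [← h]
end
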